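/- arXiv:2506.14859 — 4 statements merged into one kernel-verified Lean document; each statement's English description precedes it below -/
import Mathlib

section
/- In the two-colour unfair Pólya urn with replacement numbers m_b ≥ m_w ≥ 1, starting from b_0 black and w_0 white balls with b_0 > w_0 ≥ 0 and b_0 ≥ 1, the probability that B_n > W_n for all n ≥ 0 is strictly positive. -/
open MeasureTheory ProbabilityTheory Filter Real

/-- A two-colour unfair Pólya urn: `B n`, `W n` are the numbers of black and white balls
after `n` draws.  At each step a ball is drawn uniformly at random; if it is black,
`mb` black balls are added, and if it is white, `mw` white balls are added.
The uniform drawing rule is encoded by the conditional probability (given the natural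
filtration of the process) of a black draw being `B n / (B n + W n)`. -/
structure PolyaUrn (Ω : Type*) [MeasurableSpace Ω] where
  μ : Measure Ω
  isProb : IsProbabilityMeasure μ
  mb : ℕ
  mw : ℕ
  mb_pos : 0 < mb
  mw_pos : 0 < mw
  B : ℕ → Ω → ℕ
  W : ℕ → Ω → ℕ
  measB : ∀ n, Measurable (B n)
  measW : ∀ n, Measurable (W n)
  /-- each step either adds `mb` black balls (black draw) or `mw` white balls (white draw) -/
  step : ∀ n ω, (B (n+1) ω = B n ω + mb ∧ W (n+1) ω = W n ω) ∨
                (B (n+1) ω = B n ω ∧ W (n+1) ω = W n ω + mw)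
  /-- the natural filtration generated by the process `(B, W)` -/
  𝓕 : Filtration ℕ ‹MeasurableSpace Ω›
  h𝓕 : ∀ n, 𝓕 n = ⨆ i ∈ Set.Iic n, MeasurableSpace.comap (fun ω => (B i ω, W i ω)) inferInstance
  /-- conditionally on the past, a black ball is drawn at step `n`
  with probability `B n / (B n + W n)` -/
  hcond : ∀ n, (μ[(fun ω => if B (n+1) ω = B n ω + mb then (1:ℝ) else 0) | 𝓕 n])
      =ᵐ[μ] fun ω => (B n ω : ℝ) / ((B n ω : ℝ) + (W n ω : ℝ))

/-- The key pointwise inequality showing the white-ball fraction is a supermartingale. -/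
lemma polya_key (b w β γ : ℝ) (hb : 0 < b) (hw : 0 ≤ w) (hγ : 0 < γ) (hγβ : γ ≤ β) :
    (w / (b + w + β) - (w + γ) / (b + w + γ)) * (b / (b + w)) + (w + γ) / (b + w + γ)
      ≤ w / (b + w) := by
  have hs : 0 < b + w := by linarith
  have h1 : 0 < b + w + β := by linarith
  have h2 : 0 < b + w + γ := by linarith
  have e1 : b * (w / (b + w + β)) ≤ b * (w / (b + w + γ)) := by
    gcongr
  have e2 : b * (w / (b + w + γ)) + w * ((w + γ) / (b + w + γ)) = w := by
    field_simp
    ring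
  have hmain : b * (w / (b + w + β)) + w * ((w + γ) / (b + w + γ)) ≤ w := by linarith
  have hrw : (w / (b + w + β) - (w + γ) / (b + w + γ)) * (b / (b + w)) + (w + γ) / (b + w + γ)
      = (b * (w / (b + w + β)) + w * ((w + γ) / (b + w + γ))) / (b + w) := by
    field_simp
    ring
  rw [hrw]
  gcongr

/-- In the two-colour unfair Pólya urn with `mb ≥ mw ≥ 1`, starting from `b0` black and
`w0` white balls with `b0 > w0 ≥ 0` and `b0 ≥ 1`, the probability that `B n > W n`
for all `n ≥ 0` is strictly positive. -/
theorem stmt0 {Ω : Type*} [MeasurableSpace Ω] (U : PolyaUrn Ω) (b0 w0 : ℕ)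
    (hm : U.mw ≤ U.mb) (hbw : w0 < b0) (hb : 1 ≤ b0)
    (hB0 : ∀ ω, U.B 0 ω = b0) (hW0 : ∀ ω, U.W 0 ω = w0) :
    0 < U.μ {ω | ∀ n, U.W n ω < U.B n ω} := by
  haveI := U.isProb
  set μ := U.μ with hμ
  set M : ℕ → Ω → ℝ := fun n ω => (U.W n ω : ℝ) / ((U.B n ω : ℝ) + (U.W n ω : ℝ)) with hMdef
  -- lower bound on the number of black balls
  have hBlb : ∀ n ω, b0 ≤ U.B n ω := by
    intro n
    induction n with
    | zero => intro ω; exact (hB0 ω).ge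
    | succ n ih =>
      intro ω
      rcases U.step n ω with ⟨h1, _⟩ | ⟨h1, _⟩ <;> rw [h1]
      · exact le_trans (ih ω) (Nat.le_add_right _ _)
      · exact ih ω
  have hBpos : ∀ n ω, (0:ℝ) < (U.B n ω : ℝ) := by
    intro n ω
    have h := hBlb n ω
    have : 0 < U.B n ω := lt_of_lt_of_le hb h
    exact_mod_cast this
  have hSpos : ∀ n ω, (0:ℝ) < (U.B n ω : ℝ) + (U.W n ω : ℝ) := fun n ω =>
    add_pos_of_pos_of_nonneg (hBpos n ω) (Nat.cast_nonneg _)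
  have hM0 : ∀ n ω, 0 ≤ M n ω := fun n ω => div_nonneg (Nat.cast_nonneg _) (hSpos n ω).le
  have hM1 : ∀ n ω, M n ω ≤ 1 := fun n ω =>
    div_le_one_of_le₀ (le_add_of_nonneg_left (hBpos n ω).le) (hSpos n ω).le
  have hmeas : ∀ n, Measurable (M n) := by
    intro n
    exact (measurable_of_countable (fun p : ℕ × ℕ => (p.2 : ℝ) / ((p.1:ℝ) + (p.2:ℝ)))).comp
      ((U.measB n).prodMk (U.measW n))
  have hadp : Adapted U.𝓕 M := by
    intro n
    have hle : MeasurableSpace.comap (fun ω => (U.B n ω, U.W n ω)) inferInstance ≤ U.𝓕 n := by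
      rw [U.h𝓕 n]
      exact le_iSup₂ (f := fun i (_ : i ∈ Set.Iic n) =>
        MeasurableSpace.comap (fun ω => (U.B i ω, U.W i ω)) inferInstance) n Set.self_mem_Iic
    have hpair : Measurable[U.𝓕 n] (fun ω => (U.B n ω, U.W n ω)) := measurable_iff_comap_le.2 hle
    exact ((measurable_of_countable
      (fun p : ℕ × ℕ => (p.2 : ℝ) / ((p.1:ℝ) + (p.2:ℝ)))).comp hpair)
  have hint : ∀ n, Integrable (M n) μ := by
    intro n
    refine Integrable.mono' (integrable_const 1) (hmeas n).aestronglyMeasurable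
      (ae_of_all _ fun ω => ?_)
    rw [Real.norm_eq_abs, abs_of_nonneg (hM0 n ω)]
    exact hM1 n ω
  -- the supermartingale step
  have hstep : ∀ n, μ[M (n+1) | U.𝓕 n] ≤ᵐ[μ] M n := by
    intro n
    set a : Ω → ℝ := fun ω => (U.W n ω : ℝ)/((U.B n ω:ℝ) + (U.W n ω:ℝ) + (U.mb:ℝ))
      - ((U.W n ω:ℝ) + (U.mw:ℝ))/((U.B n ω:ℝ) + (U.W n ω:ℝ) + (U.mw:ℝ)) with ha
    set c : Ω → ℝ := fun ω =>
      ((U.W n ω:ℝ) + (U.mw:ℝ))/((U.B n ω:ℝ) + (U.W n ω:ℝ) + (U.mw:ℝ)) with hc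
    set I : Ω → ℝ := fun ω => if U.B (n+1) ω = U.B n ω + U.mb then (1:ℝ) else 0 with hI
    have hle := U.𝓕.le n
    have hmbR : (0:ℝ) < (U.mb:ℝ) := by exact_mod_cast U.mb_pos
    have hmwR : (0:ℝ) < (U.mw:ℝ) := by exact_mod_cast U.mw_pos
    have hdecomp : M (n+1) = fun ω => a ω * I ω + c ω := by
      funext ω
      have hS := hSpos n ω
      rcases U.step n ω with ⟨h1, h2⟩ | ⟨h1, h2⟩
      · simp only [hMdef, ha, hc, hI, h1, h2, if_pos rfl]
        push_cast
        field_simp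
        ring
      · have hne : U.B (n+1) ω ≠ U.B n ω + U.mb := by
          rw [h1]; have := U.mb_pos; omega
        simp only [hMdef, ha, hc, hI, h1, h2, if_neg hne]
        push_cast
        ring
    -- measurability of a, c, I
    have hpairm : Measurable[U.𝓕 n] (fun ω => (U.B n ω, U.W n ω)) := by
      refine measurable_iff_comap_le.2 ?_
      rw [U.h𝓕 n]
      exact le_iSup₂ (f := fun i (_ : i ∈ Set.Iic n) =>
        MeasurableSpace.comap (fun ω => (U.B i ω, U.W i ω)) inferInstance) n Set.self_mem_Iic
    have ha_sm : StronglyMeasurable[U.𝓕 n] a :=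
      ((measurable_of_countable (fun p : ℕ × ℕ => (p.2 : ℝ)/((p.1:ℝ) + (p.2:ℝ) + (U.mb:ℝ))
        - ((p.2:ℝ) + (U.mw:ℝ))/((p.1:ℝ) + (p.2:ℝ) + (U.mw:ℝ)))).comp hpairm).stronglyMeasurable
    have hc_sm : StronglyMeasurable[U.𝓕 n] c :=
      ((measurable_of_countable (fun p : ℕ × ℕ =>
        ((p.2:ℝ) + (U.mw:ℝ))/((p.1:ℝ) + (p.2:ℝ) + (U.mw:ℝ)))).comp hpairm).stronglyMeasurable
    have hI_meas : Measurable I := by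
      refine Measurable.ite ?_ measurable_const measurable_const
      exact measurableSet_eq_fun (U.measB (n+1)) ((U.measB n).add measurable_const)
    have hI_bd : ∀ ω, ‖I ω‖ ≤ 1 := by
      intro ω
      simp only [hI]
      split <;> simp
    have hI_int : Integrable I μ :=
      Integrable.mono' (integrable_const 1) hI_meas.aestronglyMeasurable (ae_of_all _ hI_bd)
    have ha_bd : ∀ ω, ‖a ω‖ ≤ 2 := by
      intro ω
      have hS := hSpos n ω
      have h1 : (0:ℝ) ≤ (U.W n ω:ℝ)/((U.B n ω:ℝ) + (U.W n ω:ℝ) + (U.mb:ℝ)) :=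
        div_nonneg (Nat.cast_nonneg _) (by linarith)
      have h2 : (U.W n ω:ℝ)/((U.B n ω:ℝ) + (U.W n ω:ℝ) + (U.mb:ℝ)) ≤ 1 :=
        div_le_one_of_le₀ (by linarith [hBpos n ω]) (by linarith)
      have h3 : (0:ℝ) ≤ ((U.W n ω:ℝ) + (U.mw:ℝ))/((U.B n ω:ℝ) + (U.W n ω:ℝ) + (U.mw:ℝ)) :=
        div_nonneg (by positivity) (by linarith)
      have h4 : ((U.W n ω:ℝ) + (U.mw:ℝ))/((U.B n ω:ℝ) + (U.W n ω:ℝ) + (U.mw:ℝ)) ≤ 1 :=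
        div_le_one_of_le₀ (by linarith [hBpos n ω]) (by linarith)
      simp only [ha]
      rw [Real.norm_eq_abs, abs_le]
      constructor <;> linarith
    have hc_bd : ∀ ω, ‖c ω‖ ≤ 1 := by
      intro ω
      have hS := hSpos n ω
      have h3 : (0:ℝ) ≤ c ω :=
        div_nonneg (by positivity) (by linarith)
      have h4 : c ω ≤ 1 := div_le_one_of_le₀ (by linarith [hBpos n ω]) (by linarith)
      rw [Real.norm_eq_abs, abs_le]
      constructor <;> linarith
    have haI_int : Integrable (fun ω => a ω * I ω) μ := by
      refine Integrable.mono' (integrable_const 2)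
        (((ha_sm.mono hle).measurable.mul hI_meas).aestronglyMeasurable)
        (ae_of_all _ fun ω => ?_)
      rw [Real.norm_eq_abs, abs_mul]
      calc |a ω| * |I ω| ≤ 2 * 1 := by
            refine mul_le_mul ?_ ?_ (abs_nonneg _) (by norm_num)
            · exact (Real.norm_eq_abs _ ▸ ha_bd ω)
            · exact (Real.norm_eq_abs _ ▸ hI_bd ω)
        _ = 2 := by norm_num
    have hc_int : Integrable c μ :=
      Integrable.mono' (integrable_const 1)
        ((hc_sm.mono hle).measurable.aestronglyMeasurable) (ae_of_all _ hc_bd)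
    have hcondI := U.hcond n
    have key : μ[M (n+1) | U.𝓕 n]
        =ᵐ[μ] fun ω => a ω * ((U.B n ω : ℝ) / ((U.B n ω : ℝ) + (U.W n ω : ℝ))) + c ω := by
      have e1 : μ[M (n+1) | U.𝓕 n] = μ[(fun ω => a ω * I ω + c ω) | U.𝓕 n] := by rw [hdecomp]
      have e2 : μ[(fun ω => a ω * I ω + c ω) | U.𝓕 n]
          =ᵐ[μ] μ[(fun ω => a ω * I ω) | U.𝓕 n] + μ[c | U.𝓕 n] := condExp_add haI_int hc_int _
      have e3 : μ[(fun ω => a ω * I ω) | U.𝓕 n] =ᵐ[μ] a * μ[I | U.𝓕 n] :=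
        condExp_mul_of_stronglyMeasurable_left ha_sm haI_int hI_int
      have e4 : μ[c | U.𝓕 n] = c := condExp_of_stronglyMeasurable hle hc_sm hc_int
      rw [e1]
      refine e2.trans ?_
      have : μ[(fun ω => a ω * I ω) | U.𝓕 n] + μ[c | U.𝓕 n]
          =ᵐ[μ] fun ω => a ω * ((U.B n ω : ℝ) / ((U.B n ω : ℝ) + (U.W n ω : ℝ))) + c ω := by
        filter_upwards [e3, hcondI] with ω h3 hcω
        simp only [Pi.add_apply, e4]
        rw [h3]
        simp only [Pi.mul_apply]
        rw [hcω]
      exact this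
    refine key.le.trans (ae_of_all _ fun ω => ?_)
    have hkey := polya_key (U.B n ω : ℝ) (U.W n ω : ℝ) (U.mb : ℝ) (U.mw : ℝ)
      (hBpos n ω) (Nat.cast_nonneg _) hmwR (by exact_mod_cast hm)
    simpa only [ha, hc, hMdef] using hkey
  have hsuper : Supermartingale M U.𝓕 μ := supermartingale_nat hadp.stronglyAdapted hint hstep
  have hsub : Submartingale (-M) U.𝓕 μ := hsuper.neg
  -- bound the probability that the white fraction ever reaches 1/2, up to time n
  have hbd : ∀ n, μ {ω | ∃ k ≤ n, (1/2:ℝ) ≤ M k ω}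
      ≤ ENNReal.ofReal (2 * ((w0:ℝ)/((b0:ℝ)+(w0:ℝ)))) := by
    intro n
    set A := {ω | ∃ k ≤ n, (1/2:ℝ) ≤ M k ω} with hA
    have hA_meas : MeasurableSet A := by
      have : A = ⋃ k ∈ Set.Iic n, {ω | (1/2:ℝ) ≤ M k ω} := by
        ext ω; simp [hA, Set.mem_Iic]
      rw [this]
      exact MeasurableSet.biUnion (Set.to_countable _)
        fun k _ => measurableSet_le measurable_const (hmeas k)
    set τ : Ω → ℕ∞ := fun ω => ((hittingBtwn M (Set.Ici (1/2:ℝ)) 0 n ω : ℕ) : ℕ∞) with hτdef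
    have hτ_st : IsStoppingTime U.𝓕 τ := hittingBtwn_isStoppingTime hadp measurableSet_Ici
    have hτ_le : ∀ ω, τ ω ≤ n := fun ω => WithTop.coe_le_coe.2 (hittingBtwn_le ω)
    have hneg : stoppedValue (-M) τ = -(stoppedValue M τ) := by
      funext ω; simp [stoppedValue]
    have hSV_int : Integrable (stoppedValue M τ) μ := by
      have h := hsub.integrable_stoppedValue hτ_st hτ_le
      rw [hneg] at h
      exact integrable_neg_iff.mp h
    have hSV_nonneg : 0 ≤ᵐ[μ] stoppedValue M τ := ae_of_all _ fun ω => hM0 _ ω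
    have hmean : ∫ ω, stoppedValue M τ ω ∂μ ≤ ∫ ω, M 0 ω ∂μ := by
      have h := hsub.expected_stoppedValue_mono (isStoppingTime_const U.𝓕 0) hτ_st
        (fun ω => WithTop.coe_le_coe.2 (Nat.zero_le _)) hτ_le
      rw [stoppedValue_const, hneg] at h
      simp only [Pi.neg_apply, integral_neg] at h
      linarith
    have hER : ∫ ω, M 0 ω ∂μ = (w0:ℝ)/((b0:ℝ)+(w0:ℝ)) := by
      have hMconst : M 0 = fun _ => (w0:ℝ)/((b0:ℝ)+(w0:ℝ)) := by
        funext ω; simp [hMdef, hB0 ω, hW0 ω]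
      rw [hMconst, integral_const]
      simp
    have hlow : (1/2:ℝ) * (μ A).toReal ≤ ∫ ω in A, stoppedValue M τ ω ∂μ := by
      rw [mul_comm, ← smul_eq_mul]
      refine setIntegral_ge_of_const_le hA_meas (measure_ne_top _ _) ?_ hSV_int.integrableOn
      intro ω hω
      obtain ⟨k, hk, hk2⟩ := hω
      exact stoppedValue_hittingBtwn_mem ⟨k, ⟨Nat.zero_le _, hk⟩, hk2⟩
    have hup : ∫ ω in A, stoppedValue M τ ω ∂μ ≤ ∫ ω, stoppedValue M τ ω ∂μ :=
      setIntegral_le_integral hSV_int hSV_nonneg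
    have htoReal : (μ A).toReal ≤ 2 * ((w0:ℝ)/((b0:ℝ)+(w0:ℝ))) := by linarith
    rw [← ENNReal.ofReal_toReal (measure_ne_top μ A)]
    exact ENNReal.ofReal_le_ofReal htoReal
  -- the complement event
  have hGmeas : MeasurableSet {ω | ∀ n, U.W n ω < U.B n ω} := by
    have : {ω | ∀ n, U.W n ω < U.B n ω} = ⋂ n, {ω | U.W n ω < U.B n ω} := by
      ext ω; simp
    rw [this]
    exact MeasurableSet.iInter fun n => measurableSet_lt (U.measW n) (U.measB n)
  have hsubset : {ω | ∀ n, U.W n ω < U.B n ω}ᶜ ⊆ ⋃ n, {ω | ∃ k ≤ n, (1/2:ℝ) ≤ M k ω} := by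
    intro ω hω
    simp only [Set.mem_compl_iff, Set.mem_setOf_eq, not_forall, not_lt] at hω
    obtain ⟨k, hk⟩ := hω
    refine Set.mem_iUnion.2 ⟨k, k, le_rfl, ?_⟩
    have hkR : (U.B k ω : ℝ) ≤ (U.W k ω : ℝ) := by exact_mod_cast hk
    rw [hMdef]
    rw [le_div_iff₀ (hSpos k ω)]
    linarith
  have hGc : μ {ω | ∀ n, U.W n ω < U.B n ω}ᶜ
      ≤ ENNReal.ofReal (2 * ((w0:ℝ)/((b0:ℝ)+(w0:ℝ)))) := by
    refine (measure_mono hsubset).trans ?_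
    have hmono : Monotone (fun n => {ω | ∃ k ≤ n, (1/2:ℝ) ≤ M k ω}) := by
      intro i j hij ω hω
      obtain ⟨k, hk, h⟩ := hω
      exact ⟨k, hk.trans hij, h⟩
    rw [hmono.directed_le.measure_iUnion]
    exact iSup_le hbd
  have hlt : ENNReal.ofReal (2 * ((w0:ℝ)/((b0:ℝ)+(w0:ℝ)))) < 1 := by
    rw [← ENNReal.ofReal_one]
    refine ENNReal.ofReal_lt_ofReal_iff (by norm_num) |>.mpr ?_
    have hs : (0:ℝ) < (b0:ℝ) + (w0:ℝ) := by
      have : (1:ℝ) ≤ (b0:ℝ) := by exact_mod_cast hb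
      have : (0:ℝ) ≤ (w0:ℝ) := Nat.cast_nonneg _
      linarith
    have hbwR : (w0:ℝ) < (b0:ℝ) := by exact_mod_cast hbw
    rw [show 2 * ((w0:ℝ)/((b0:ℝ)+(w0:ℝ))) = (2*(w0:ℝ))/((b0:ℝ)+(w0:ℝ)) by ring]
    rw [div_lt_one hs]
    linarith
  by_contra hcon
  push_neg at hcon
  have hzero : μ {ω | ∀ n, U.W n ω < U.B n ω} = 0 := le_antisymm hcon bot_le
  have hcompl : μ {ω | ∀ n, U.W n ω < U.B n ω}ᶜ = 1 := by
    rw [measure_compl hGmeas (measure_ne_top _ _), hzero, measure_univ]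
    simp
  rw [hcompl] at hGc
  exact absurd (lt_of_le_of_lt hGc hlt) (lt_irrefl _)
end

section
/- In the two-colour unfair Pólya urn with m_b > m_w, the ratio W_n / B_n converges to 0 almost surely as n → ∞. -/
open MeasureTheory ProbabilityTheory Filter Real

namespace PolyaAux

variable {Ω : Type*} [MeasurableSpace Ω] (U : PolyaUrn Ω)

/-- the black-draw indicator -/
def ber (n : ℕ) : Ω → ℝ := fun ω => if U.B (n+1) ω = U.B n ω + U.mb then (1:ℝ) else 0

lemma step_cases (n : ℕ) (ω : Ω) :
    (U.B (n+1) ω = U.B n ω + U.mb ∧ U.W (n+1) ω = U.W n ω ∧ ber U n ω = 1) ∨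
    (U.B (n+1) ω = U.B n ω ∧ U.W (n+1) ω = U.W n ω + U.mw ∧ ber U n ω = 0) := by
  have hmb := U.mb_pos
  rcases U.step n ω with ⟨h1, h2⟩ | ⟨h1, h2⟩
  · exact Or.inl ⟨h1, h2, by simp [ber, h1]⟩
  · refine Or.inr ⟨h1, h2, ?_⟩
    have h : ¬ (U.B (n+1) ω = U.B n ω + U.mb) := by omega
    simp [ber, h]

lemma B_mono (ω : Ω) : Monotone fun n => U.B n ω := by
  apply monotone_nat_of_le_succ
  intro n
  rcases U.step n ω with ⟨h1, _⟩ | ⟨h1, _⟩ <;> omega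

lemma W_mono (ω : Ω) : Monotone fun n => U.W n ω := by
  apply monotone_nat_of_le_succ
  intro n
  rcases U.step n ω with ⟨_, h2⟩ | ⟨_, h2⟩ <;> omega

lemma one_le_B (hB0 : ∀ ω, 1 ≤ U.B 0 ω) (n : ℕ) (ω : Ω) : 1 ≤ U.B n ω :=
  le_trans (hB0 ω) (B_mono U ω (Nat.zero_le n))

lemma one_le_W (hW0 : ∀ ω, 1 ≤ U.W 0 ω) (n : ℕ) (ω : Ω) : 1 ≤ U.W n ω :=
  le_trans (hW0 ω) (W_mono U ω (Nat.zero_le n))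

lemma T_le (hm : U.mw ≤ U.mb) (n : ℕ) (ω : Ω) :
    U.B n ω + U.W n ω ≤ U.B 0 ω + U.W 0 ω + n * U.mb := by
  induction n with
  | zero => omega
  | succ n ih =>
    rcases U.step n ω with ⟨h1, h2⟩ | ⟨h1, h2⟩ <;> · rw [h1, h2]; nlinarith [ih]

lemma measurable_pair_F {i n : ℕ} (h : i ≤ n) :
    Measurable[U.𝓕 n] fun ω => (U.B i ω, U.W i ω) := by
  rw [measurable_iff_comap_le, U.h𝓕 n]
  exact le_biSup (f := fun i => MeasurableSpace.comap (fun ω => (U.B i ω, U.W i ω)) inferInstance) (Set.mem_Iic.2 h)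

lemma measB_F {i n : ℕ} (h : i ≤ n) : Measurable[U.𝓕 n] (U.B i) :=
  measurable_fst.comp (measurable_pair_F U h)

lemma measW_F {i n : ℕ} (h : i ≤ n) : Measurable[U.𝓕 n] (U.W i) :=
  measurable_snd.comp (measurable_pair_F U h)

lemma measBr_F {i n : ℕ} (h : i ≤ n) : Measurable[U.𝓕 n] fun ω => (U.B i ω : ℝ) :=
  measurable_from_top.comp (measB_F U h)

lemma measWr_F {i n : ℕ} (h : i ≤ n) : Measurable[U.𝓕 n] fun ω => (U.W i ω : ℝ) :=
  measurable_from_top.comp (measW_F U h)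

lemma measurable_ber (n : ℕ) : Measurable (ber U n) := by
  have hs : MeasurableSet {ω | U.B (n+1) ω = U.B n ω + U.mb} :=
    measurableSet_eq_fun (U.measB (n+1)) ((U.measB n).add_const _)
  have : ber U n = Set.indicator {ω | U.B (n+1) ω = U.B n ω + U.mb} (fun _ => (1:ℝ)) := by
    funext ω
    simp only [ber, Set.indicator, Set.mem_setOf_eq]
  rw [this]
  exact measurable_const.indicator hs

lemma ber_bdd (n : ℕ) (ω : Ω) : |ber U n ω| ≤ 1 := by
  simp only [ber]
  split <;> norm_num

lemma integrable_of_bdd {f : Ω → ℝ} (hf : Measurable f) {C : ℝ} (h : ∀ ω, |f ω| ≤ C) :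
    Integrable f U.μ := by
  haveI := U.isProb
  exact ⟨hf.aestronglyMeasurable,
    HasFiniteIntegral.of_bounded (C := C) (ae_of_all _ fun ω => by
      rw [Real.norm_eq_abs]; exact h ω)⟩

lemma condexp_ber (n : ℕ) {c₁ c₂ : Ω → ℝ} (h₁ : Measurable[U.𝓕 n] c₁)
    (h₂ : Measurable[U.𝓕 n] c₂) {b₁ b₂ : ℝ} (hb₁ : ∀ ω, |c₁ ω| ≤ b₁) (hb₂ : ∀ ω, |c₂ ω| ≤ b₂) :
    U.μ[fun ω => c₁ ω * ber U n ω + c₂ ω | U.𝓕 n] =ᵐ[U.μ]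
      fun ω => c₁ ω * ((U.B n ω : ℝ) / ((U.B n ω : ℝ) + (U.W n ω : ℝ))) + c₂ ω := by
  haveI := U.isProb
  have hle := U.𝓕.le n
  have hc₁m : Measurable c₁ := h₁.mono hle le_rfl
  have hc₂m : Measurable c₂ := h₂.mono hle le_rfl
  have hber_int : Integrable (ber U n) U.μ := integrable_of_bdd U (measurable_ber U n) (ber_bdd U n)
  have h1 : Integrable (c₁ * ber U n) U.μ := by
    refine integrable_of_bdd U (hc₁m.mul (measurable_ber U n)) (C := b₁) fun ω => ?_
    calc |c₁ ω * ber U n ω| = |c₁ ω| * |ber U n ω| := abs_mul _ _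
    _ ≤ b₁ * 1 := mul_le_mul (hb₁ ω) (ber_bdd U n ω) (abs_nonneg _) ((abs_nonneg _).trans (hb₁ ω))
    _ = b₁ := mul_one _
  have h2 : Integrable c₂ U.μ := integrable_of_bdd U hc₂m hb₂
  have hadd : U.μ[c₁ * ber U n + c₂ | U.𝓕 n] =ᵐ[U.μ]
      U.μ[c₁ * ber U n | U.𝓕 n] + U.μ[c₂ | U.𝓕 n] := condExp_add h1 h2 _
  have hmul : U.μ[c₁ * ber U n | U.𝓕 n] =ᵐ[U.μ] c₁ * U.μ[ber U n | U.𝓕 n] :=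
    condExp_mul_of_stronglyMeasurable_left h₁.stronglyMeasurable h1 hber_int
  have hc2 : U.μ[c₂ | U.𝓕 n] = c₂ := condExp_of_stronglyMeasurable hle h₂.stronglyMeasurable h2
  have hcond : U.μ[ber U n | U.𝓕 n] =ᵐ[U.μ]
      fun ω => (U.B n ω : ℝ) / ((U.B n ω : ℝ) + (U.W n ω : ℝ)) := U.hcond n
  have : U.μ[fun ω => c₁ ω * ber U n ω + c₂ ω | U.𝓕 n] = U.μ[c₁ * ber U n + c₂ | U.𝓕 n] := rfl
  rw [this]
  refine hadd.trans ?_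
  rw [hc2]
  filter_upwards [hmul, hcond] with ω hω1 hω2
  simp only [Pi.add_apply, Pi.mul_apply] at *
  rw [hω1, hω2]

lemma decay {e : ℕ → ℝ} (he : ∀ n, 0 ≤ e n) {c K d : ℝ} (hc : 0 < c) (hc1 : c ≤ 1)
    (hK : 1 ≤ K) (hd : 0 ≤ d)
    (hrec : ∀ n, e (n+1) ≤ (1 - c / (K + n * d)) * e n) :
    Tendsto e atTop (nhds 0) := by
  have hKd : ∀ n : ℕ, (1:ℝ) ≤ K + n * d := fun n => le_add_of_le_of_nonneg hK (by positivity)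
  have hKd0 : ∀ n : ℕ, (0:ℝ) < K + n * d := fun n => lt_of_lt_of_le one_pos (hKd n)
  have hfac0 : ∀ n : ℕ, 0 ≤ 1 - c / (K + n * d) := by
    intro n
    have h1 : c / (K + n * d) ≤ c / 1 := by
      apply div_le_div_of_nonneg_left hc.le ?_ (hKd n)
      · exact one_pos
    simp only [div_one] at h1
    linarith
  have hP : ∀ n, e n ≤ e 0 * ∏ i ∈ Finset.range n, (1 - c / (K + i * d)) := by
    intro n
    induction n with
    | zero => simp
    | succ n ih =>
      rw [Finset.prod_range_succ, ← mul_assoc, mul_comm (e 0 * _) _]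
      calc e (n+1) ≤ (1 - c / (K + n * d)) * e n := hrec n
      _ ≤ (1 - c / (K + n * d)) * (e 0 * ∏ i ∈ Finset.range n, (1 - c / (K + i * d))) :=
          mul_le_mul_of_nonneg_left ih (hfac0 n)
      _ = (1 - c / (K + n * d)) * e 0 * ∏ i ∈ Finset.range n, (1 - c / (K + i * d)) := by ring
      _ = _ := by ring
  have hKdpos : (0:ℝ) < K + d := by linarith
  have ha : 0 < c / (K + d) := div_pos hc hKdpos
  have hexp : ∀ n, ∏ i ∈ Finset.range n, (1 - c / (K + i * d)) ≤
      Real.exp (-(c / (K + d) * ∑ i ∈ Finset.range n, (1 : ℝ) / (i + 1))) := by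
    intro n
    have h0 : ∀ i ∈ Finset.range n, (1 - c / (K + i * d)) ≤
        Real.exp (-(c / (K + d) * ((1:ℝ) / (i + 1)))) := by
      intro i _
      have h1 : 1 - c / (K + i * d) ≤ Real.exp (-(c / (K + i * d))) := by
        have := Real.add_one_le_exp (-(c / (K + i * d)))
        linarith
      refine h1.trans (Real.exp_le_exp.2 (neg_le_neg ?_))
      have h2 : c / (K + d) * ((1:ℝ) / (i + 1)) = c / ((K + d) * (i + 1)) := by
        rw [div_mul_div_comm, mul_one]
      rw [h2]
      apply div_le_div_of_nonneg_left hc.le (hKd0 i)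
      have : (K + i * d : ℝ) ≤ (K + d) * (i + 1) := by nlinarith [Nat.cast_nonneg (α := ℝ) i]
      linarith [this]
    calc ∏ i ∈ Finset.range n, (1 - c / (K + i * d))
        ≤ ∏ i ∈ Finset.range n, Real.exp (-(c / (K + d) * ((1:ℝ) / (i + 1)))) :=
          Finset.prod_le_prod (fun i _ => hfac0 i) h0
      _ = Real.exp (∑ i ∈ Finset.range n, -(c / (K + d) * ((1:ℝ) / (i + 1)))) :=
          (Real.exp_sum _ _).symm
      _ = Real.exp (-(c / (K + d) * ∑ i ∈ Finset.range n, (1:ℝ) / (i + 1))) := by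
          rw [Finset.sum_neg_distrib, ← Finset.mul_sum]
  have hS : Tendsto (fun n => ∑ i ∈ Finset.range n, (1:ℝ) / (i + 1)) atTop atTop :=
    Real.tendsto_sum_range_one_div_nat_succ_atTop
  have hSm : Tendsto (fun n => c / (K + d) * ∑ i ∈ Finset.range n, (1:ℝ) / (i + 1)) atTop atTop :=
    hS.const_mul_atTop ha
  have hneg : Tendsto (fun n => -(c / (K + d) * ∑ i ∈ Finset.range n, (1:ℝ) / (i + 1)))
      atTop atBot := tendsto_neg_atTop_atBot.comp hSm
  have hexp0 : Tendsto (fun n => Real.exp (-(c / (K + d) *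
      ∑ i ∈ Finset.range n, (1:ℝ) / (i + 1)))) atTop (nhds 0) :=
    Real.tendsto_exp_atBot.comp hneg
  have hg : Tendsto (fun n => e 0 * Real.exp (-(c / (K + d) *
      ∑ i ∈ Finset.range n, (1:ℝ) / (i + 1)))) atTop (nhds 0) := by
    simpa using hexp0.const_mul (e 0)
  refine squeeze_zero he (fun n => ?_) hg
  exact (hP n).trans (mul_le_mul_of_nonneg_left (hexp n) (he 0))

/-- indicator that B has stayed constant from time m to m+N and initial total is ≤ K -/
def gA (m K N : ℕ) : Ω → ℝ := fun ω =>
  (if U.B (m+N) ω = U.B m ω then (1:ℝ) else 0) * (if U.B 0 ω + U.W 0 ω ≤ K then (1:ℝ) else 0)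

lemma gA_nonneg (m K N : ℕ) (ω : Ω) : 0 ≤ gA U m K N ω := by
  unfold gA; split <;> split <;> norm_num

lemma gA_le_one (m K N : ℕ) (ω : Ω) : |gA U m K N ω| ≤ 1 := by
  unfold gA; split <;> split <;> norm_num

lemma gA_cases (m K N : ℕ) (ω : Ω) : gA U m K N ω = 0 ∨
    (gA U m K N ω = 1 ∧ U.B (m+N) ω = U.B m ω ∧ U.B 0 ω + U.W 0 ω ≤ K) := by
  unfold gA
  split <;> split <;> simp_all

lemma gA_eq_indicator (m K N : ℕ) : gA U m K N =
    Set.indicator ({ω | U.B (m+N) ω = U.B m ω} ∩ {ω | U.B 0 ω + U.W 0 ω ≤ K}) (fun _ => (1:ℝ)) := by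
  funext ω
  simp only [gA, Set.indicator_apply, Set.mem_inter_iff, Set.mem_setOf_eq]
  by_cases h1 : U.B (m+N) ω = U.B m ω <;> by_cases h2 : U.B 0 ω + U.W 0 ω ≤ K <;>
    simp [h1, h2]

lemma measurable_gA_F (m K N : ℕ) : Measurable[U.𝓕 (m+N)] (gA U m K N) := by
  rw [gA_eq_indicator]
  refine measurable_const.indicator (MeasurableSet.inter ?_ ?_)
  · exact measurableSet_eq_fun (measB_F U le_rfl) (measB_F U (Nat.le_add_right m N))
  · have h : Measurable[U.𝓕 (m+N)] fun ω => U.B 0 ω + U.W 0 ω :=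
      (measB_F U (Nat.zero_le _)).add (measW_F U (Nat.zero_le _))
    exact h measurableSet_Iic

lemma measurable_gA (m K N : ℕ) : Measurable (gA U m K N) :=
  (measurable_gA_F U m K N).mono (U.𝓕.le _) le_rfl

lemma gA_rec (m K N : ℕ) (ω : Ω) :
    gA U m K (N+1) ω = (-(gA U m K N ω)) * ber U (m+N) ω + gA U m K N ω := by
  have hrfl : m + (N+1) = (m+N) + 1 := rfl
  have hmono : U.B m ω ≤ U.B (m+N) ω := B_mono U ω (Nat.le_add_right m N)
  have hmb := U.mb_pos
  rcases step_cases U (m+N) ω with ⟨h1, h2, h3⟩ | ⟨h1, h2, h3⟩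
  · have hne : ¬ (U.B (m+(N+1)) ω = U.B m ω) := by rw [hrfl]; omega
    unfold gA
    rw [if_neg hne, h3]
    ring
  · unfold gA
    rw [hrfl, h1, h3]
    ring

lemma condexp_gA (m K N : ℕ) :
    U.μ[gA U m K (N+1) | U.𝓕 (m+N)] =ᵐ[U.μ] fun ω => (-(gA U m K N ω)) *
      ((U.B (m+N) ω : ℝ) / ((U.B (m+N) ω : ℝ) + (U.W (m+N) ω : ℝ))) + gA U m K N ω := by
  have h : gA U m K (N+1) = fun ω => (-(gA U m K N ω)) * ber U (m+N) ω + gA U m K N ω := by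
    funext ω; exact gA_rec U m K N ω
  rw [h]
  exact condexp_ber U (m+N) (measurable_gA_F U m K N).neg (measurable_gA_F U m K N)
    (b₁ := 1) (b₂ := 1) (fun ω => by rw [abs_neg]; exact gA_le_one U m K N ω)
    (fun ω => gA_le_one U m K N ω)

lemma eA_rec (hm : U.mw < U.mb) (hB0 : ∀ ω, 1 ≤ U.B 0 ω) (m K N : ℕ) (hK : 1 ≤ K) :
    ∫ ω, gA U m K (N+1) ω ∂U.μ ≤
      (1 - 1 / (((K:ℝ) + m * U.mb) + N * U.mb)) * ∫ ω, gA U m K N ω ∂U.μ := by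
  haveI := U.isProb
  have hint1 : Integrable (gA U m K (N+1)) U.μ :=
    integrable_of_bdd U (measurable_gA U m K (N+1)) (gA_le_one U m K (N+1))
  have hintN : Integrable (gA U m K N) U.μ :=
    integrable_of_bdd U (measurable_gA U m K N) (gA_le_one U m K N)
  have hδpos : (0:ℝ) < ((K:ℝ) + m * U.mb) + N * U.mb := by
    have : (1:ℝ) ≤ (K:ℝ) := by exact_mod_cast hK
    positivity
  rw [← integral_condExp (U.𝓕.le (m+N)) (f := gA U m K (N+1))]
  rw [← integral_const_mul]
  refine integral_mono_ae integrable_condExp (hintN.const_mul _) ?_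
  filter_upwards [condexp_gA U m K N] with ω hω
  rw [hω]
  rcases gA_cases U m K N ω with h | ⟨h, hBc, hT⟩
  · rw [h]; ring_nf; exact le_refl _
  · rw [h]
    have hB1 : (1:ℝ) ≤ (U.B (m+N) ω : ℝ) := by exact_mod_cast one_le_B U hB0 (m+N) ω
    have hW0 : (0:ℝ) ≤ (U.W (m+N) ω : ℝ) := by positivity
    have hTle : (U.B (m+N) ω : ℝ) + (U.W (m+N) ω : ℝ) ≤ ((K:ℝ) + m * U.mb) + N * U.mb := by
      have h1 : U.B (m+N) ω + U.W (m+N) ω ≤ U.B 0 ω + U.W 0 ω + (m+N) * U.mb :=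
        T_le U hm.le (m+N) ω
      have h2 : U.B (m+N) ω + U.W (m+N) ω ≤ K + (m+N) * U.mb := by omega
      have := (Nat.cast_le (α := ℝ)).2 h2
      push_cast at this ⊢
      linarith
    have hTpos : (0:ℝ) < (U.B (m+N) ω : ℝ) + (U.W (m+N) ω : ℝ) := by linarith
    have hp : 1 / (((K:ℝ) + m * U.mb) + N * U.mb) ≤
        (U.B (m+N) ω : ℝ) / ((U.B (m+N) ω : ℝ) + (U.W (m+N) ω : ℝ)) := by
      calc 1 / (((K:ℝ) + m * U.mb) + N * U.mb) ≤ 1 / ((U.B (m+N) ω : ℝ) + (U.W (m+N) ω : ℝ)) := by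
            apply one_div_le_one_div_of_le hTpos hTle
        _ ≤ (U.B (m+N) ω : ℝ) / ((U.B (m+N) ω : ℝ) + (U.W (m+N) ω : ℝ)) := by
            gcongr
    linarith

lemma eA_tendsto (hm : U.mw < U.mb) (hB0 : ∀ ω, 1 ≤ U.B 0 ω) (m K : ℕ) (hK : 1 ≤ K) :
    Tendsto (fun N => ∫ ω, gA U m K N ω ∂U.μ) atTop (nhds 0) := by
  refine decay (fun n => integral_nonneg (gA_nonneg U m K n)) (c := 1) one_pos le_rfl
    (K := (K:ℝ) + m * U.mb) ?_ (d := (U.mb : ℝ)) (by positivity) ?_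
  · have : (1:ℝ) ≤ (K:ℝ) := by exact_mod_cast hK
    have : (0:ℝ) ≤ (m:ℝ) * U.mb := by positivity
    linarith
  · intro n
    exact eA_rec U hm hB0 m K n hK

lemma null_EA (hm : U.mw < U.mb) (hB0 : ∀ ω, 1 ≤ U.B 0 ω) (m K : ℕ) (hK : 1 ≤ K) :
    U.μ {ω | (∀ N, U.B (m+N) ω = U.B m ω) ∧ U.B 0 ω + U.W 0 ω ≤ K} = 0 := by
  haveI := U.isProb
  set E := {ω | (∀ N, U.B (m+N) ω = U.B m ω) ∧ U.B 0 ω + U.W 0 ω ≤ K} with hE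
  have hmeasEN : ∀ N : ℕ, MeasurableSet
      ({ω | U.B (m+N) ω = U.B m ω} ∩ {ω | U.B 0 ω + U.W 0 ω ≤ K}) := by
    intro N
    refine MeasurableSet.inter ?_ ?_
    · exact measurableSet_eq_fun (U.measB _) (U.measB _)
    · exact ((U.measB 0).add (U.measW 0)) measurableSet_Iic
  have hle : ∀ N : ℕ, U.μ E ≤ ENNReal.ofReal (∫ ω, gA U m K N ω ∂U.μ) := by
    intro N
    have hsub : E ⊆ {ω | U.B (m+N) ω = U.B m ω} ∩ {ω | U.B 0 ω + U.W 0 ω ≤ K} :=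
      fun ω hω => ⟨hω.1 N, hω.2⟩
    refine (measure_mono hsub).trans (le_of_eq ?_)
    have hi : ∫ ω, gA U m K N ω ∂U.μ =
        (U.μ ({ω | U.B (m + N) ω = U.B m ω} ∩ {ω | U.B 0 ω + U.W 0 ω ≤ K})).toReal := by
      rw [gA_eq_indicator]
      exact integral_indicator_one (hmeasEN N)
    rw [hi, ENNReal.ofReal_toReal (measure_ne_top U.μ _)]
  have h0 : Tendsto (fun N => ENNReal.ofReal (∫ ω, gA U m K N ω ∂U.μ)) atTop (nhds 0) := by
    have := ENNReal.tendsto_ofReal (eA_tendsto U hm hB0 m K hK)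
    simpa using this
  exact le_zero_iff.1 (ge_of_tendsto' h0 hle)

lemma Binf (hm : U.mw < U.mb) (hB0 : ∀ ω, 1 ≤ U.B 0 ω) :
    ∀ᵐ ω ∂U.μ, Tendsto (fun n => U.B n ω) atTop atTop := by
  haveI := U.isProb
  have h : ∀ᵐ ω ∂U.μ, ∀ (m K : ℕ),
      ¬((∀ N, U.B (m+N) ω = U.B m ω) ∧ U.B 0 ω + U.W 0 ω ≤ K + 1) := by
    rw [ae_all_iff]
    intro m
    rw [ae_all_iff]
    intro K
    have h0 := null_EA U hm hB0 m (K+1) (by omega)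
    rw [ae_iff]
    simpa [not_not] using h0
  filter_upwards [h] with ω hω
  have key : ∀ m, ∃ N, U.B m ω < U.B (m+N) ω := by
    intro m
    have h1 := hω m (U.B 0 ω + U.W 0 ω)
    have h2 : ¬ (∀ N, U.B (m+N) ω = U.B m ω) := fun hc => h1 ⟨hc, by omega⟩
    push_neg at h2
    obtain ⟨N, hN⟩ := h2
    exact ⟨N, lt_of_le_of_ne (B_mono U ω (Nat.le_add_right m N)) (Ne.symm hN)⟩
  have grow : ∀ M : ℕ, ∃ n, M ≤ U.B n ω := by
    intro M
    induction M with
    | zero => exact ⟨0, Nat.zero_le _⟩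
    | succ M ih =>
      obtain ⟨n, hn⟩ := ih
      obtain ⟨N, hN⟩ := key n
      exact ⟨n+N, by omega⟩
  refine tendsto_atTop_atTop_of_monotone' (B_mono U ω) ?_
  rintro ⟨b, hb⟩
  obtain ⟨n, hn⟩ := grow (b+1)
  have := hb (Set.mem_range_self n)
  omega

lemma alg (mb mw b w : ℝ) (hmw : 1 ≤ mw) (hlt : mw + 1 ≤ mb)
    (hb : 2*mb*mw ≤ b) (hb1 : 1 ≤ b) (hw : 1 ≤ w) :
    (w/(b+mb) - (w+mw)/b) * (b/(b+w)) + (w+mw)/b ≤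
      (1 - (1/(2*(mb+1)))/(b+w)) * (w/b) := by
  have hmb2 : (2:ℝ) ≤ mb := by linarith
  have hb0 : (0:ℝ) < b := by linarith
  have hbm : (0:ℝ) < b + mb := by linarith
  have hbw : (0:ℝ) < b + w := by linarith
  have hmb1 : (0:ℝ) < 2*(mb+1) := by linarith
  have h1 : (w/(b+mb) - (w+mw)/b) * (b/(b+w)) + (w+mw)/b
      = w/b - (w*(b*mb - mw*b - mw*mb))/((b+w)*(b*(b+mb))) := by
    field_simp
    ring
  have h2 : (1 - (1/(2*(mb+1)))/(b+w)) * (w/b)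
      = w/b - (w*((1/(2*(mb+1)))*(b+mb)))/((b+w)*(b*(b+mb))) := by
    field_simp
  rw [h1, h2]
  have hS : b ≤ 2*(b*mb - mw*b - mw*mb) := by
    nlinarith [mul_nonneg (by linarith : (0:ℝ) ≤ b) (by linarith : (0:ℝ) ≤ mb - mw - 1)]
  have key : (1/(2*(mb+1)))*(b+mb) ≤ b*mb - mw*b - mw*mb := by
    rw [div_mul_eq_mul_div, div_le_iff₀ hmb1]
    nlinarith [mul_nonneg (by linarith : (0:ℝ) ≤ mb+1)
      (by linarith : (0:ℝ) ≤ 2*(b*mb - mw*b - mw*mb) - b),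
      mul_nonneg (by linarith : (0:ℝ) ≤ b - 1) (by linarith : (0:ℝ) ≤ mb)]
  apply sub_le_sub_left
  gcongr

/-- the good event: B is large at time m, initial total at most K -/
def AB (m K : ℕ) : Set Ω := {ω | 2 * U.mb * U.mw ≤ U.B m ω ∧ U.B 0 ω + U.W 0 ω ≤ K}

lemma measurableSet_AB_F (m K : ℕ) : MeasurableSet[U.𝓕 m] (AB U m K) := by
  have h1 : MeasurableSet[U.𝓕 m] {ω | 2 * U.mb * U.mw ≤ U.B m ω} :=
    (measB_F U le_rfl) measurableSet_Ici
  have h2 : MeasurableSet[U.𝓕 m] {ω | U.B 0 ω + U.W 0 ω ≤ K} :=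
    ((measB_F U (Nat.zero_le m)).add (measW_F U (Nat.zero_le m))) measurableSet_Iic
  exact h1.inter h2

lemma measurableSet_AB_F' (m K n : ℕ) : MeasurableSet[U.𝓕 (m+n)] (AB U m K) :=
  (U.𝓕.mono (Nat.le_add_right m n)) _ (measurableSet_AB_F U m K)

/-- the localized ratio process -/
noncomputable def gB (m K n : ℕ) : Ω → ℝ := fun ω =>
  Set.indicator (AB U m K) (fun ω => (U.W (m+n) ω : ℝ) / (U.B (m+n) ω : ℝ)) ω

lemma gB_nonneg (m K n : ℕ) (ω : Ω) : 0 ≤ gB U m K n ω := by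
  unfold gB
  apply Set.indicator_nonneg
  intro ω _
  positivity

lemma W_le_on_AB (hm : U.mw < U.mb) {m K : ℕ} (j : ℕ) {ω : Ω} (hA : ω ∈ AB U m K) :
    U.W j ω ≤ K + j * U.mb := by
  have h1 := T_le U hm.le j ω
  have h2 := hA.2
  omega

lemma gB_bdd (hm : U.mw < U.mb) (hB0 : ∀ ω, 1 ≤ U.B 0 ω) (m K n : ℕ) (ω : Ω) :
    |gB U m K n ω| ≤ (K:ℝ) + (m+n) * U.mb := by
  have hKb : (0:ℝ) ≤ (K:ℝ) + (m+n) * U.mb := by positivity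
  unfold gB
  by_cases hA : ω ∈ AB U m K
  · rw [Set.indicator_of_mem hA]
    have hB1 : (1:ℝ) ≤ (U.B (m+n) ω : ℝ) := by exact_mod_cast one_le_B U hB0 (m+n) ω
    have hW : (U.W (m+n) ω : ℝ) ≤ (K:ℝ) + (m+n) * U.mb := by
      have := W_le_on_AB U hm (m+n) hA
      exact_mod_cast this
    rw [abs_of_nonneg (by positivity)]
    calc (U.W (m+n) ω : ℝ) / (U.B (m+n) ω : ℝ) ≤ (U.W (m+n) ω : ℝ) / 1 := by gcongr
    _ = (U.W (m+n) ω : ℝ) := div_one _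
    _ ≤ _ := hW
  · rw [Set.indicator_of_notMem hA]
    simpa using hKb

lemma measurable_gB_F (m K n : ℕ) : Measurable[U.𝓕 (m+n)] (gB U m K n) :=
  Measurable.indicator ((measWr_F U le_rfl).div (measBr_F U le_rfl)) (measurableSet_AB_F' U m K n)

lemma measurable_gB (m K n : ℕ) : Measurable (gB U m K n) :=
  (measurable_gB_F U m K n).mono (U.𝓕.le _) le_rfl

/-- the coefficient functions for the one-step decomposition of `gB` -/
noncomputable def cB1 (m K n : ℕ) : Ω → ℝ := fun ω =>
  Set.indicator (AB U m K) (fun ω => (U.W (m+n) ω : ℝ)/((U.B (m+n) ω : ℝ) + U.mb)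
    - ((U.W (m+n) ω : ℝ) + U.mw)/(U.B (m+n) ω : ℝ)) ω

noncomputable def cB2 (m K n : ℕ) : Ω → ℝ := fun ω =>
  Set.indicator (AB U m K) (fun ω => ((U.W (m+n) ω : ℝ) + U.mw)/(U.B (m+n) ω : ℝ)) ω

lemma gB_rec (m K n : ℕ) (ω : Ω) :
    gB U m K (n+1) ω = cB1 U m K n ω * ber U (m+n) ω + cB2 U m K n ω := by
  by_cases hA : ω ∈ AB U m K
  · simp only [gB, cB1, cB2, Set.indicator_of_mem hA]
    have hrfl : m+(n+1) = (m+n)+1 := rfl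
    rcases step_cases U (m+n) ω with ⟨h1, h2, h3⟩ | ⟨h1, h2, h3⟩ <;>
    · rw [hrfl, h1, h2, h3]
      push_cast
      ring
  · simp only [gB, cB1, cB2, Set.indicator_of_notMem hA]
    ring

lemma measurable_cB1_F (m K n : ℕ) : Measurable[U.𝓕 (m+n)] (cB1 U m K n) :=
  Measurable.indicator
    (((measWr_F U le_rfl).div ((measBr_F U le_rfl).add_const _)).sub
      (((measWr_F U le_rfl).add_const _).div (measBr_F U le_rfl)))
    (measurableSet_AB_F' U m K n)

lemma measurable_cB2_F (m K n : ℕ) : Measurable[U.𝓕 (m+n)] (cB2 U m K n) :=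
  Measurable.indicator (((measWr_F U le_rfl).add_const _).div (measBr_F U le_rfl))
    (measurableSet_AB_F' U m K n)

lemma cB2_bdd (hm : U.mw < U.mb) (hB0 : ∀ ω, 1 ≤ U.B 0 ω) (m K n : ℕ) (ω : Ω) :
    |cB2 U m K n ω| ≤ ((K:ℝ) + (m+n) * U.mb) + U.mw := by
  have hKb : (0:ℝ) ≤ ((K:ℝ) + (m+n) * U.mb) + U.mw := by positivity
  unfold cB2
  by_cases hA : ω ∈ AB U m K
  · rw [Set.indicator_of_mem hA]
    have hB1 : (1:ℝ) ≤ (U.B (m+n) ω : ℝ) := by exact_mod_cast one_le_B U hB0 (m+n) ω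
    have hW : (U.W (m+n) ω : ℝ) ≤ (K:ℝ) + (m+n) * U.mb := by
      exact_mod_cast W_le_on_AB U hm (m+n) hA
    rw [abs_of_nonneg (by positivity)]
    calc ((U.W (m+n) ω : ℝ) + U.mw) / (U.B (m+n) ω : ℝ)
        ≤ ((U.W (m+n) ω : ℝ) + U.mw) / 1 := by gcongr
    _ = (U.W (m+n) ω : ℝ) + U.mw := div_one _
    _ ≤ _ := by linarith
  · rw [Set.indicator_of_notMem hA]
    simpa using hKb

lemma cB1_bdd (hm : U.mw < U.mb) (hB0 : ∀ ω, 1 ≤ U.B 0 ω) (m K n : ℕ) (ω : Ω) :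
    |cB1 U m K n ω| ≤ 2*(((K:ℝ) + (m+n) * U.mb) + U.mw) := by
  have hKb : (0:ℝ) ≤ ((K:ℝ) + (m+n) * U.mb) + U.mw := by positivity
  unfold cB1
  by_cases hA : ω ∈ AB U m K
  · rw [Set.indicator_of_mem hA]
    have hB1 : (1:ℝ) ≤ (U.B (m+n) ω : ℝ) := by exact_mod_cast one_le_B U hB0 (m+n) ω
    have hW : (U.W (m+n) ω : ℝ) ≤ (K:ℝ) + (m+n) * U.mb := by
      exact_mod_cast W_le_on_AB U hm (m+n) hA
    have hWn : (0:ℝ) ≤ (U.W (m+n) ω : ℝ) := by positivity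
    have hmwn : (0:ℝ) ≤ (U.mw : ℝ) := by positivity
    have h1 : (U.W (m+n) ω : ℝ)/((U.B (m+n) ω : ℝ) + U.mb) ≤ ((K:ℝ) + (m+n) * U.mb) + U.mw := by
      calc (U.W (m+n) ω : ℝ)/((U.B (m+n) ω : ℝ) + U.mb) ≤ (U.W (m+n) ω : ℝ)/1 := by
            gcongr
            · linarith
      _ = (U.W (m+n) ω : ℝ) := div_one _
      _ ≤ _ := by linarith
    have h1' : (0:ℝ) ≤ (U.W (m+n) ω : ℝ)/((U.B (m+n) ω : ℝ) + U.mb) := by positivity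
    have h2 : ((U.W (m+n) ω : ℝ) + U.mw)/(U.B (m+n) ω : ℝ) ≤ ((K:ℝ) + (m+n) * U.mb) + U.mw := by
      calc ((U.W (m+n) ω : ℝ) + U.mw) / (U.B (m+n) ω : ℝ)
          ≤ ((U.W (m+n) ω : ℝ) + U.mw) / 1 := by gcongr
      _ = (U.W (m+n) ω : ℝ) + U.mw := div_one _
      _ ≤ _ := by linarith
    have h2' : (0:ℝ) ≤ ((U.W (m+n) ω : ℝ) + U.mw)/(U.B (m+n) ω : ℝ) := by positivity
    rw [abs_sub_le_iff]
    constructor <;> linarith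
  · rw [Set.indicator_of_notMem hA]
    simp only [abs_zero]
    linarith

lemma condexp_gB (hm : U.mw < U.mb) (hB0 : ∀ ω, 1 ≤ U.B 0 ω) (m K n : ℕ) :
    U.μ[gB U m K (n+1) | U.𝓕 (m+n)] =ᵐ[U.μ] fun ω => cB1 U m K n ω *
      ((U.B (m+n) ω : ℝ) / ((U.B (m+n) ω : ℝ) + (U.W (m+n) ω : ℝ))) + cB2 U m K n ω := by
  have h : gB U m K (n+1) = fun ω => cB1 U m K n ω * ber U (m+n) ω + cB2 U m K n ω := by
    funext ω; exact gB_rec U m K n ω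
  rw [h]
  exact condexp_ber U (m+n) (measurable_cB1_F U m K n) (measurable_cB2_F U m K n)
    (cB1_bdd U hm hB0 m K n) (cB2_bdd U hm hB0 m K n)

lemma condexp_gB_le (hm : U.mw < U.mb) (hB0 : ∀ ω, 1 ≤ U.B 0 ω) (hW0 : ∀ ω, 1 ≤ U.W 0 ω)
    (m K n : ℕ) (hK : 1 ≤ K) :
    U.μ[gB U m K (n+1) | U.𝓕 (m+n)] ≤ᵐ[U.μ]
      fun ω => (1 - (1/(2*((U.mb:ℝ)+1))) / (((K:ℝ) + m * U.mb) + n * U.mb)) * gB U m K n ω := by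
  filter_upwards [condexp_gB U hm hB0 m K n] with ω hω
  rw [hω]
  by_cases hA : ω ∈ AB U m K
  · simp only [gB, cB1, cB2, Set.indicator_of_mem hA]
    set b := (U.B (m+n) ω : ℝ) with hbdef
    set w := (U.W (m+n) ω : ℝ) with hwdef
    have hB1 : (1:ℝ) ≤ b := by rw [hbdef]; exact_mod_cast one_le_B U hB0 (m+n) ω
    have hW1 : (1:ℝ) ≤ w := by rw [hwdef]; exact_mod_cast one_le_W U hW0 (m+n) ω
    have hmw1 : (1:ℝ) ≤ (U.mw : ℝ) := by exact_mod_cast U.mw_pos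
    have hmblt : (U.mw:ℝ) + 1 ≤ (U.mb:ℝ) := by exact_mod_cast hm
    have hbig : 2*(U.mb:ℝ)*(U.mw:ℝ) ≤ b := by
      have h1 : 2 * U.mb * U.mw ≤ U.B m ω := hA.1
      have h2 : U.B m ω ≤ U.B (m+n) ω := B_mono U ω (Nat.le_add_right m n)
      rw [hbdef]
      exact_mod_cast le_trans h1 h2
    have halg := alg (U.mb) (U.mw) b w hmw1 hmblt hbig (by linarith) hW1
    refine halg.trans ?_
    have hDn : b + w ≤ ((K:ℝ) + m * U.mb) + n * U.mb := by
      have h1 := T_le U hm.le (m+n) ω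
      have h2 := hA.2
      have h3 : U.B (m+n) ω + U.W (m+n) ω ≤ K + (m+n) * U.mb := by omega
      have h4 := (Nat.cast_le (α := ℝ)).2 h3
      push_cast at h4
      linarith
    have hbw : (0:ℝ) < b + w := by linarith
    have hDpos : (0:ℝ) < ((K:ℝ) + m * U.mb) + n * U.mb := by linarith
    have hc : (0:ℝ) < 1/(2*((U.mb:ℝ)+1)) := by positivity
    have hwb : (0:ℝ) ≤ w / b := by positivity
    apply mul_le_mul_of_nonneg_right _ hwb
    have : (1/(2*((U.mb:ℝ)+1))) / (((K:ℝ) + m * U.mb) + n * U.mb)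
        ≤ (1/(2*((U.mb:ℝ)+1))) / (b + w) := by gcongr
    linarith
  · simp only [gB, cB1, cB2, Set.indicator_of_notMem hA]
    simp

/-- the filtration shifted by `m` -/
def shiftF (m : ℕ) : Filtration ℕ ‹MeasurableSpace Ω› where
  seq := fun n => U.𝓕 (m+n)
  mono' := fun i j h => U.𝓕.mono (by omega)
  le' := fun n => U.𝓕.le _

lemma integrable_gB (hm : U.mw < U.mb) (hB0 : ∀ ω, 1 ≤ U.B 0 ω) (m K n : ℕ) :
    Integrable (gB U m K n) U.μ :=
  integrable_of_bdd U (measurable_gB U m K n) (gB_bdd U hm hB0 m K n)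

lemma delta_mem (m K n : ℕ) (hK : 1 ≤ K) :
    0 ≤ (1/(2*((U.mb:ℝ)+1))) / (((K:ℝ) + m * U.mb) + n * U.mb) ∧
    (1/(2*((U.mb:ℝ)+1))) / (((K:ℝ) + m * U.mb) + n * U.mb) ≤ 1 := by
  have hK1 : (1:ℝ) ≤ (K:ℝ) := by exact_mod_cast hK
  have hD : (1:ℝ) ≤ ((K:ℝ) + m * U.mb) + n * U.mb := by
    have : (0:ℝ) ≤ (m:ℝ) * U.mb := by positivity
    have : (0:ℝ) ≤ (n:ℝ) * U.mb := by positivity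
    linarith
  have hc0 : (0:ℝ) < 2*((U.mb:ℝ)+1) := by positivity
  have hc : (0:ℝ) < 1/(2*((U.mb:ℝ)+1)) := by positivity
  have hc1 : 1/(2*((U.mb:ℝ)+1)) ≤ 1 := by
    rw [div_le_one hc0]
    have : (0:ℝ) ≤ (U.mb:ℝ) := by positivity
    linarith
  constructor
  · positivity
  · calc (1/(2*((U.mb:ℝ)+1))) / (((K:ℝ) + m * U.mb) + n * U.mb)
        ≤ (1/(2*((U.mb:ℝ)+1))) / 1 := by gcongr
    _ = 1/(2*((U.mb:ℝ)+1)) := div_one _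
    _ ≤ 1 := hc1

lemma superB (hm : U.mw < U.mb) (hB0 : ∀ ω, 1 ≤ U.B 0 ω) (hW0 : ∀ ω, 1 ≤ U.W 0 ω)
    (m K : ℕ) (hK : 1 ≤ K) : Supermartingale (gB U m K) (shiftF U m) U.μ := by
  haveI := U.isProb
  refine supermartingale_nat (fun n => (measurable_gB_F U m K n).stronglyMeasurable)
    (fun n => integrable_gB U hm hB0 m K n) (fun n => ?_)
  refine (condexp_gB_le U hm hB0 hW0 m K n hK).trans (ae_of_all _ fun ω => ?_)
  have hg := gB_nonneg U m K n ω
  have hδ := (delta_mem U m K n hK).1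
  nlinarith [mul_nonneg hδ hg]

lemma eB_rec (hm : U.mw < U.mb) (hB0 : ∀ ω, 1 ≤ U.B 0 ω) (hW0 : ∀ ω, 1 ≤ U.W 0 ω)
    (m K n : ℕ) (hK : 1 ≤ K) :
    ∫ ω, gB U m K (n+1) ω ∂U.μ ≤
      (1 - (1/(2*((U.mb:ℝ)+1))) / (((K:ℝ) + m * U.mb) + n * U.mb)) * ∫ ω, gB U m K n ω ∂U.μ := by
  haveI := U.isProb
  rw [← integral_condExp (U.𝓕.le (m+n)) (f := gB U m K (n+1))]
  rw [← integral_const_mul]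
  exact integral_mono_ae integrable_condExp ((integrable_gB U hm hB0 m K n).const_mul _)
    (condexp_gB_le U hm hB0 hW0 m K n hK)

lemma eB_tendsto (hm : U.mw < U.mb) (hB0 : ∀ ω, 1 ≤ U.B 0 ω) (hW0 : ∀ ω, 1 ≤ U.W 0 ω)
    (m K : ℕ) (hK : 1 ≤ K) :
    Tendsto (fun n => ∫ ω, gB U m K n ω ∂U.μ) atTop (nhds 0) := by
  have hmb1 : (1:ℝ) ≤ (U.mb:ℝ) := by exact_mod_cast U.mb_pos
  have hK1 : (1:ℝ) ≤ (K:ℝ) := by exact_mod_cast hK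
  refine decay (fun n => integral_nonneg (gB_nonneg U m K n))
    (c := 1/(2*((U.mb:ℝ)+1))) (by positivity) ?_
    (K := (K:ℝ) + m * U.mb) ?_ (d := (U.mb:ℝ)) (by positivity) ?_
  · rw [div_le_one (by positivity)]
    linarith
  · have : (0:ℝ) ≤ (m:ℝ) * U.mb := by positivity
    linarith
  · intro n
    exact eB_rec U hm hB0 hW0 m K n hK

lemma gB_tendsto_zero (hm : U.mw < U.mb) (hB0 : ∀ ω, 1 ≤ U.B 0 ω) (hW0 : ∀ ω, 1 ≤ U.W 0 ω)
    (m K : ℕ) (hK : 1 ≤ K) :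
    ∀ᵐ ω ∂U.μ, Tendsto (fun n => gB U m K n ω) atTop (nhds 0) := by
  haveI := U.isProb
  have hsuper := superB U hm hB0 hW0 m K hK
  have hone : ∀ n, eLpNorm (gB U m K n) 1 U.μ = ENNReal.ofReal (∫ ω, gB U m K n ω ∂U.μ) := by
    intro n
    rw [eLpNorm_one_eq_lintegral_enorm,
      ofReal_integral_eq_lintegral_ofReal (integrable_gB U hm hB0 m K n)
        (ae_of_all _ (gB_nonneg U m K n))]
    congr 1
    funext ω
    exact (Real.enorm_eq_ofReal (gB_nonneg U m K n ω))
  have hmono : ∀ n, ∫ ω, gB U m K n ω ∂U.μ ≤ ∫ ω, gB U m K 0 ω ∂U.μ := by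
    intro n
    have h1 := hsuper.2.1 0 n (Nat.zero_le n)
    calc ∫ ω, gB U m K n ω ∂U.μ
        = ∫ ω, (U.μ[gB U m K n | (shiftF U m) 0]) ω ∂U.μ :=
          (integral_condExp ((shiftF U m).le 0) (f := gB U m K n)).symm
      _ ≤ ∫ ω, gB U m K 0 ω ∂U.μ :=
          integral_mono_ae integrable_condExp (integrable_gB U hm hB0 m K 0) h1
  have hbdd : ∀ n, eLpNorm ((-(gB U m K)) n) 1 U.μ ≤ (∫ ω, gB U m K 0 ω ∂U.μ).toNNReal := by
    intro n
    have : (-(gB U m K)) n = -(gB U m K n) := rfl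
    rw [this, eLpNorm_neg, hone n]
    exact ENNReal.ofReal_le_ofReal (hmono n)
  have hconv := (hsuper.neg).exists_ae_tendsto_of_bdd hbdd
  have hlint : Tendsto (fun n => ∫⁻ ω, ENNReal.ofReal (gB U m K n ω) ∂U.μ) atTop (nhds 0) := by
    have heq : ∀ n, ∫⁻ ω, ENNReal.ofReal (gB U m K n ω) ∂U.μ =
        ENNReal.ofReal (∫ ω, gB U m K n ω ∂U.μ) := fun n =>
      (ofReal_integral_eq_lintegral_ofReal (integrable_gB U hm hB0 m K n)
        (ae_of_all _ (gB_nonneg U m K n))).symm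
    simp_rw [heq]
    have := ENNReal.tendsto_ofReal (eB_tendsto U hm hB0 hW0 m K hK)
    simpa using this
  have hlim : ∫⁻ ω, liminf (fun n => ENNReal.ofReal (gB U m K n ω)) atTop ∂U.μ = 0 := by
    refine le_antisymm ?_ zero_le
    refine (lintegral_liminf_le (fun n => (measurable_gB U m K n).ennreal_ofReal)).trans ?_
    rw [hlint.liminf_eq]
  have hzero : ∀ᵐ ω ∂U.μ, liminf (fun n => ENNReal.ofReal (gB U m K n ω)) atTop = 0 := by
    have hmeas : Measurable fun ω => liminf (fun n => ENNReal.ofReal (gB U m K n ω)) atTop :=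
      Measurable.liminf (fun n => (measurable_gB U m K n).ennreal_ofReal)
    have := (lintegral_eq_zero_iff hmeas).1 hlim
    filter_upwards [this] with ω hω using hω
  filter_upwards [hconv, hzero] with ω hc hz
  obtain ⟨c, hc⟩ := hc
  have hc' : Tendsto (fun n => gB U m K n ω) atTop (nhds (-c)) := by
    have := hc.neg
    simpa using this
  have h0 : (0:ℝ) ≤ -c := ge_of_tendsto hc' (Eventually.of_forall fun n => gB_nonneg U m K n ω)
  have h1 : liminf (fun n => ENNReal.ofReal (gB U m K n ω)) atTop = ENNReal.ofReal (-c) :=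
    (ENNReal.tendsto_ofReal hc').liminf_eq
  have h2 : ENNReal.ofReal (-c) = 0 := h1.symm.trans hz
  have h3 : -c ≤ 0 := ENNReal.ofReal_eq_zero.1 h2
  have h4 : -c = 0 := le_antisymm h3 h0
  rwa [h4] at hc'

lemma ratio_tendsto_on_AB (hm : U.mw < U.mb) (hB0 : ∀ ω, 1 ≤ U.B 0 ω) (hW0 : ∀ ω, 1 ≤ U.W 0 ω)
    (m K : ℕ) (hK : 1 ≤ K) :
    ∀ᵐ ω ∂U.μ, ω ∈ AB U m K →
      Tendsto (fun n => (U.W n ω : ℝ) / (U.B n ω : ℝ)) atTop (nhds 0) := by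
  filter_upwards [gB_tendsto_zero U hm hB0 hW0 m K hK] with ω hω hA
  have h1 : Tendsto (fun n => (U.W (m+n) ω : ℝ) / (U.B (m+n) ω : ℝ)) atTop (nhds 0) := by
    refine Tendsto.congr (fun n => ?_) hω
    simp [gB, Set.indicator_of_mem hA]
  rw [← tendsto_add_atTop_iff_nat m]
  refine Tendsto.congr (fun n => ?_) h1
  rw [Nat.add_comm]

end PolyaAux

/-- In the two-colour unfair Pólya urn with `mb > mw`, the ratio `W n / B n`
converges to `0` almost surely. -/
theorem stmt1 {Ω : Type*} [MeasurableSpace Ω] (U : PolyaUrn Ω)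
    (hm : U.mw < U.mb) (hB0 : ∀ ω, 1 ≤ U.B 0 ω) (hW0 : ∀ ω, 1 ≤ U.W 0 ω) :
    ∀ᵐ ω ∂U.μ, Tendsto (fun n => (U.W n ω : ℝ) / (U.B n ω : ℝ)) atTop (nhds 0) := by
  classical
  haveI := U.isProb
  have hB := PolyaAux.Binf U hm hB0
  have hall : ∀ᵐ ω ∂U.μ, ∀ m K : ℕ, ω ∈ PolyaAux.AB U m (K+1) →
      Tendsto (fun n => (U.W n ω : ℝ) / (U.B n ω : ℝ)) atTop (nhds 0) := by
    rw [MeasureTheory.ae_all_iff]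
    intro m
    rw [MeasureTheory.ae_all_iff]
    intro K
    exact PolyaAux.ratio_tendsto_on_AB U hm hB0 hW0 m (K+1) (by omega)
  filter_upwards [hB, hall] with ω h1 h2
  obtain ⟨m, hm'⟩ := (h1.eventually_ge_atTop (2 * U.mb * U.mw)).exists
  have hT0 : 1 ≤ U.B 0 ω + U.W 0 ω := by
    have := hB0 ω; omega
  refine h2 m (U.B 0 ω + U.W 0 ω - 1) ⟨hm', by omega⟩
end

section
/- Consider the q-colour unfair Pólya urn where a draw of colour i adds m_i balls of colour i, with m_1 ≥ m_j for all j ≠ 1. If initially the number of balls of colour 1 exceeds the total number of all other balls (absolute majority), then with positive probability colour 1 holds an absolute majority at every time n ≥ 0. -/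
open MeasureTheory ProbabilityTheory Filter Real

/-- A `q`-colour unfair Pólya urn: `X n i` is the number of balls of colour `i` after `n`
draws. At each step a ball is drawn uniformly at random; a draw of colour `i` adds `m i`
balls of colour `i`. The uniform drawing rule is encoded by the conditional probability
(given the natural filtration) of drawing colour `i` being `X n i / ∑ j, X n j`. -/
structure PolyaUrnQ (q : ℕ) (Ω : Type*) [MeasurableSpace Ω] where
  μ : Measure Ω
  isProb : IsProbabilityMeasure μ
  m : Fin q → ℕ
  m_pos : ∀ i, 0 < m i
  X : ℕ → Fin q → Ω → ℕ
  measX : ∀ n i, Measurable (X n i)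
  /-- at each step, some colour `i` is drawn and `m i` balls of colour `i` are added -/
  step : ∀ n ω, ∃ i : Fin q, ∀ j : Fin q,
      X (n+1) j ω = X n j ω + (if j = i then m i else 0)
  /-- the natural filtration generated by the process `X` -/
  𝓕 : Filtration ℕ ‹MeasurableSpace Ω›
  h𝓕 : ∀ n, 𝓕 n = ⨆ i ∈ Set.Iic n, MeasurableSpace.comap (fun ω j => X i j ω) inferInstance
  /-- conditionally on the past, colour `i` is drawn at step `n`
  with probability `X n i / ∑ j, X n j` -/
  hcond : ∀ n (i : Fin q),
      (μ[(fun ω => if X (n+1) i ω = X n i ω + m i then (1:ℝ) else 0) | 𝓕 n])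
        =ᵐ[μ] fun ω => (X n i ω : ℝ) / (∑ j : Fin q, (X n j ω : ℝ))


namespace PolyaAux

variable {q : ℕ} {Ω : Type*} [MeasurableSpace Ω]

noncomputable def Sf (U : PolyaUrnQ q Ω) (c : Fin q) (n : ℕ) (ω : Ω) : ℝ :=
  ∑ j ∈ Finset.univ.erase c, (U.X n j ω : ℝ)

noncomputable def Tf (U : PolyaUrnQ q Ω) (n : ℕ) (ω : Ω) : ℝ :=
  ∑ j : Fin q, (U.X n j ω : ℝ)

noncomputable def Yf (U : PolyaUrnQ q Ω) (c : Fin q) (n : ℕ) (ω : Ω) : ℝ :=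
  Sf U c n ω / Tf U n ω

variable {U : PolyaUrnQ q Ω} {c : Fin q}

lemma hX1 (hinit : ∀ j ω, 1 ≤ U.X 0 j ω) : ∀ n j ω, 1 ≤ U.X n j ω := by
  intro n
  induction n with
  | zero => exact fun j ω => hinit j ω
  | succ n ih =>
    intro j ω
    obtain ⟨i, hi⟩ := U.step n ω
    rw [hi j]
    exact le_trans (ih j ω) (Nat.le_add_right _ _)

lemma hST (n : ℕ) (ω : Ω) : Sf U c n ω + (U.X n c ω : ℝ) = Tf U n ω :=
  Finset.sum_erase_add _ _ (Finset.mem_univ c)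

lemma hSnn (n : ℕ) (ω : Ω) : 0 ≤ Sf U c n ω :=
  Finset.sum_nonneg fun _ _ => Nat.cast_nonneg _

include c in
lemma hTpos (hinit : ∀ j ω, 1 ≤ U.X 0 j ω) (n : ℕ) (ω : Ω) : 0 < Tf U n ω := by
  have h1 : (1 : ℝ) ≤ (U.X n c ω : ℝ) := by exact_mod_cast hX1 hinit n c ω
  have := hSnn (U := U) (c := c) n ω
  have := hST (U := U) (c := c) n ω
  linarith

lemma hSleT (n : ℕ) (ω : Ω) : Sf U c n ω ≤ Tf U n ω := by
  have := hST (U := U) (c := c) n ω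
  have : (0:ℝ) ≤ (U.X n c ω : ℝ) := Nat.cast_nonneg _
  linarith [hST (U := U) (c := c) n ω]

lemma hY_iff (hinit : ∀ j ω, 1 ≤ U.X 0 j ω) (n : ℕ) (ω : Ω) :
    Yf U c n ω < 1/2 ↔ (∑ j ∈ Finset.univ.erase c, U.X n j ω) < U.X n c ω := by
  have ht := hTpos (U := U) (c := c) hinit n ω
  have hst := hST (U := U) (c := c) n ω
  have hcast : Sf U c n ω = ((∑ j ∈ Finset.univ.erase c, U.X n j ω : ℕ) : ℝ) := by
    simp [Sf]
  rw [Yf, div_lt_iff₀ ht]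
  constructor
  · intro h
    have : Sf U c n ω < (U.X n c ω : ℝ) := by linarith
    rw [hcast] at this
    exact_mod_cast this
  · intro h
    have : Sf U c n ω < (U.X n c ω : ℝ) := by
      rw [hcast]; exact_mod_cast h
    linarith

lemma measXR (n : ℕ) (j : Fin q) : Measurable fun ω => (U.X n j ω : ℝ) :=
  measurable_from_top.comp (U.measX n j)

lemma measXR_F {n N : ℕ} (hn : n ≤ N) (j : Fin q) :
    Measurable[U.𝓕 N] fun ω => (U.X n j ω : ℝ) := by
  have h1 : MeasurableSpace.comap (fun ω k => U.X n k ω) inferInstance ≤ U.𝓕 N := by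
    rw [U.h𝓕 N]
    exact le_biSup (fun i => MeasurableSpace.comap (fun ω k => U.X i k ω) inferInstance)
      (Set.mem_Iic.mpr hn)
  have h2 : Measurable[MeasurableSpace.comap (fun ω k => U.X n k ω) inferInstance]
      (fun ω k => U.X n k ω) := measurable_iff_comap_le.mpr le_rfl
  have h3 : Measurable[U.𝓕 N] (fun ω k => U.X n k ω) := h2.mono h1 le_rfl
  exact measurable_from_top.comp ((measurable_pi_apply j).comp h3)

lemma measSf_F {n N : ℕ} (hn : n ≤ N) : Measurable[U.𝓕 N] (Sf U c n) :=
  Finset.measurable_sum _ fun j _ => measXR_F hn j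

lemma measTf_F {n N : ℕ} (hn : n ≤ N) : Measurable[U.𝓕 N] (Tf U n) :=
  Finset.measurable_sum _ fun j _ => measXR_F hn j

lemma measYf_F {n N : ℕ} (hn : n ≤ N) : Measurable[U.𝓕 N] (Yf U c n) :=
  (measSf_F hn).div (measTf_F hn)

lemma measYf (n : ℕ) : Measurable (Yf U c n) :=
  ((measYf_F (le_refl n)).mono (U.𝓕.le n) le_rfl)

lemma integrable_of_bounds {f : Ω → ℝ} (hf : Measurable f) (h0 : ∀ ω, 0 ≤ f ω)
    (h1 : ∀ ω, f ω ≤ 1) : Integrable f U.μ := by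
  haveI := U.isProb
  refine Integrable.mono' (integrable_const 1) hf.aestronglyMeasurable ?_
  filter_upwards with ω
  rw [Real.norm_eq_abs, abs_le]
  exact ⟨by linarith [h0 ω], h1 ω⟩

lemma Yf_nonneg (hinit : ∀ j ω, 1 ≤ U.X 0 j ω) (n : ℕ) (ω : Ω) : 0 ≤ Yf U c n ω :=
  div_nonneg (hSnn n ω) (hTpos (c := c) hinit n ω).le

lemma Yf_le_one (hinit : ∀ j ω, 1 ≤ U.X 0 j ω) (n : ℕ) (ω : Ω) : Yf U c n ω ≤ 1 :=
  div_le_one_of_le₀ (hSleT n ω) (hTpos (c := c) hinit n ω).le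

lemma integrableYf (hinit : ∀ j ω, 1 ≤ U.X 0 j ω) (n : ℕ) : Integrable (Yf U c n) U.μ :=
  integrable_of_bounds (measYf n) (Yf_nonneg hinit n) (Yf_le_one hinit n)

/-- the indicator of drawing colour `i` at step `n` -/
noncomputable def Df (U : PolyaUrnQ q Ω) (n : ℕ) (i : Fin q) (ω : Ω) : ℝ :=
  if U.X (n+1) i ω = U.X n i ω + U.m i then (1:ℝ) else 0

/-- `𝓕 n`-measurable coefficient: value of `Y (n+1)` if colour `i` is drawn -/
noncomputable def gf (U : PolyaUrnQ q Ω) (c : Fin q) (n : ℕ) (i : Fin q) (ω : Ω) : ℝ :=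
  (Sf U c n ω + if i = c then 0 else (U.m i : ℝ)) / (Tf U n ω + U.m i)

lemma measDf (n : ℕ) (i : Fin q) : Measurable (Df U n i) := by
  have hs : MeasurableSet {ω | U.X (n+1) i ω = U.X n i ω + U.m i} :=
    measurableSet_eq_fun (U.measX (n+1) i) ((U.measX n i).add measurable_const)
  exact (measurable_const.ite hs measurable_const)

lemma Df_nonneg (n : ℕ) (i : Fin q) (ω : Ω) : 0 ≤ Df U n i ω := by
  unfold Df; split <;> norm_num

lemma Df_le_one (n : ℕ) (i : Fin q) (ω : Ω) : Df U n i ω ≤ 1 := by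
  unfold Df; split <;> norm_num

lemma measgf_F (n : ℕ) (i : Fin q) : Measurable[U.𝓕 n] (gf U c n i) :=
  ((measSf_F le_rfl).add measurable_const).div ((measTf_F le_rfl).add measurable_const)

lemma gf_nonneg (hinit : ∀ j ω, 1 ≤ U.X 0 j ω) (n : ℕ) (i : Fin q) (ω : Ω) :
    0 ≤ gf U c n i ω := by
  apply div_nonneg
  · have := hSnn (U := U) (c := c) n ω
    split <;> [linarith; positivity]
  · have := hTpos (U := U) (c := c) hinit n ω
    positivity

lemma gf_le_one (hinit : ∀ j ω, 1 ≤ U.X 0 j ω) (n : ℕ) (i : Fin q) (ω : Ω) :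
    gf U c n i ω ≤ 1 := by
  have hT := hTpos (U := U) (c := c) hinit n ω
  have hS := hSleT (U := U) (c := c) n ω
  have hmi : (0:ℝ) ≤ (U.m i : ℝ) := Nat.cast_nonneg _
  apply div_le_one_of_le₀
  · split <;> linarith
  · positivity

/-- pointwise decomposition of `Y (n+1)` according to the colour drawn -/
lemma decomp (n : ℕ) (ω : Ω) :
    Yf U c (n+1) ω = ∑ i : Fin q, gf U c n i ω * Df U n i ω := by
  obtain ⟨i₀, hi₀⟩ := U.step n ω
  have hD : ∀ i, Df U n i ω = if i = i₀ then 1 else 0 := by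
    intro i
    unfold Df
    rcases eq_or_ne i i₀ with h | h
    · subst h
      rw [hi₀ i, if_pos rfl, if_pos rfl, if_pos rfl]
    · have hmi := U.m_pos i
      rw [hi₀ i, if_neg h, if_neg (by omega), if_neg h]
  have hsum : ∑ i : Fin q, gf U c n i ω * Df U n i ω = gf U c n i₀ ω := by
    rw [Finset.sum_eq_single i₀]
    · rw [hD i₀, if_pos rfl, mul_one]
    · intro b _ hb
      rw [hD b, if_neg hb, mul_zero]
    · intro h; exact absurd (Finset.mem_univ i₀) h
  rw [hsum]
  have hSnew : Sf U c (n+1) ω = Sf U c n ω + (if i₀ = c then 0 else (U.m i₀ : ℝ)) := by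
    unfold Sf
    have : ∀ j : Fin q, (U.X (n+1) j ω : ℝ)
        = (U.X n j ω : ℝ) + (if j = i₀ then (U.m i₀ : ℝ) else 0) := by
      intro j
      rw [hi₀ j]
      push_cast
      split <;> simp
    rw [Finset.sum_congr rfl fun j _ => this j, Finset.sum_add_distrib,
      Finset.sum_ite_eq' (Finset.univ.erase c) i₀ (fun _ => (U.m i₀ : ℝ))]
    congr 1
    rcases eq_or_ne i₀ c with h | h
    · simp [h]
    · simp [Finset.mem_erase, h]
  have hTnew : Tf U (n+1) ω = Tf U n ω + (U.m i₀ : ℝ) := by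
    unfold Tf
    have : ∀ j : Fin q, (U.X (n+1) j ω : ℝ)
        = (U.X n j ω : ℝ) + (if j = i₀ then (U.m i₀ : ℝ) else 0) := by
      intro j
      rw [hi₀ j]
      push_cast
      split <;> simp
    rw [Finset.sum_congr rfl fun j _ => this j, Finset.sum_add_distrib,
      Finset.sum_ite_eq' Finset.univ i₀ (fun _ => (U.m i₀ : ℝ))]
    simp
  rw [Yf, hSnew, hTnew, gf]

/-- the pointwise drift inequality -/
lemma drift (hm : ∀ j, U.m j ≤ U.m c) (hinit : ∀ j ω, 1 ≤ U.X 0 j ω) (n : ℕ) (ω : Ω) :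
    ∑ i : Fin q, gf U c n i ω * ((U.X n i ω : ℝ) / Tf U n ω) ≤ Yf U c n ω := by
  have hT := hTpos (U := U) (c := c) hinit n ω
  have hS0 := hSnn (U := U) (c := c) n ω
  have hSle := hSleT (U := U) (c := c) n ω
  have hst := hST (U := U) (c := c) n ω
  have hmc : (0:ℝ) < (U.m c : ℝ) := by exact_mod_cast U.m_pos c
  have step1 : ∀ i : Fin q, gf U c n i ω
      ≤ (Sf U c n ω + if i = c then 0 else (U.m c : ℝ)) / (Tf U n ω + U.m c) := by
    intro i
    have hmi : (0:ℝ) < (U.m i : ℝ) := by exact_mod_cast U.m_pos i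
    have hmle : (U.m i : ℝ) ≤ (U.m c : ℝ) := by exact_mod_cast hm i
    rcases eq_or_ne i c with h | h
    · subst h; exact le_refl _
    · rw [gf, if_neg h, if_neg h, div_le_div_iff₀ (by linarith) (by linarith)]
      nlinarith
  calc ∑ i : Fin q, gf U c n i ω * ((U.X n i ω : ℝ) / Tf U n ω)
      ≤ ∑ i : Fin q, (Sf U c n ω + if i = c then 0 else (U.m c : ℝ)) / (Tf U n ω + U.m c)
          * ((U.X n i ω : ℝ) / Tf U n ω) := by
        apply Finset.sum_le_sum
        intro i _
        exact mul_le_mul_of_nonneg_right (step1 i) (by positivity)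
    _ = Yf U c n ω := by
        have hC : (U.X n c ω : ℝ) = Tf U n ω - Sf U c n ω := by linarith
        rw [← Finset.sum_erase_add _ _ (Finset.mem_univ c), if_pos rfl]
        have h1 : ∀ i ∈ Finset.univ.erase c,
            (Sf U c n ω + if i = c then 0 else (U.m c : ℝ)) / (Tf U n ω + U.m c)
              * ((U.X n i ω : ℝ) / Tf U n ω)
            = (Sf U c n ω + (U.m c : ℝ)) / (Tf U n ω + U.m c)
              * ((U.X n i ω : ℝ) / Tf U n ω) := by
          intro i hi
          rw [if_neg (Finset.ne_of_mem_erase hi)]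
        rw [Finset.sum_congr rfl h1, ← Finset.mul_sum, ← Finset.sum_div]
        show (Sf U c n ω + (U.m c:ℝ)) / (Tf U n ω + U.m c) * (Sf U c n ω / Tf U n ω)
            + (Sf U c n ω + 0) / (Tf U n ω + U.m c) * ((U.X n c ω : ℝ) / Tf U n ω)
            = Yf U c n ω
        rw [Yf, hC]
        have h2 : Tf U n ω ≠ 0 := ne_of_gt hT
        have h3 : Tf U n ω + (U.m c : ℝ) ≠ 0 := by positivity
        field_simp
        ring

/-- the supermartingale inequality for the minority fraction -/
lemma super (hm : ∀ j, U.m j ≤ U.m c) (hinit : ∀ j ω, 1 ≤ U.X 0 j ω) (n : ℕ) :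
    (U.μ[Yf U c (n+1) | U.𝓕 n]) ≤ᵐ[U.μ] Yf U c n := by
  haveI := U.isProb
  have hle := U.𝓕.le n
  have hintD : ∀ i : Fin q, Integrable (Df U n i) U.μ :=
    fun i => integrable_of_bounds (measDf n i) (Df_nonneg n i) (Df_le_one n i)
  have hmeasg : ∀ i : Fin q, Measurable (gf U c n i) :=
    fun i => (measgf_F n i).mono hle le_rfl
  have hintgD : ∀ i : Fin q, Integrable (gf U c n i * Df U n i) U.μ := by
    intro i
    refine integrable_of_bounds ((hmeasg i).mul ((measDf n i))) ?_ ?_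
    · intro ω
      exact mul_nonneg (gf_nonneg hinit n i ω) (Df_nonneg n i ω)
    · intro ω
      exact mul_le_one₀ (gf_le_one hinit n i ω) (Df_nonneg n i ω) (Df_le_one n i ω)
  have hYe : Yf U c (n+1) = ∑ i : Fin q, gf U c n i * Df U n i := by
    funext ω
    rw [decomp n ω, Finset.sum_apply]
    rfl
  have h2 : U.μ[Yf U c (n+1) | U.𝓕 n]
      =ᵐ[U.μ] ∑ i : Fin q, U.μ[gf U c n i * Df U n i | U.𝓕 n] := by
    rw [hYe]
    exact condExp_finsetSum (fun i _ => hintgD i) _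
  have h3 : ∀ i : Fin q, U.μ[gf U c n i * Df U n i | U.𝓕 n]
      =ᵐ[U.μ] fun ω => gf U c n i ω * ((U.X n i ω : ℝ) / Tf U n ω) := by
    intro i
    have hsm : StronglyMeasurable[U.𝓕 n] (gf U c n i) := by
      borelize ℝ
      exact (measgf_F n i).stronglyMeasurable
    have hpull := condExp_mul_of_stronglyMeasurable_left hsm (hintgD i) (hintD i)
    refine hpull.trans ?_
    have := U.hcond n i
    filter_upwards [this] with ω hω
    show gf U c n i ω * _ = _
    rw [show (U.μ[(fun ω => if U.X (n+1) i ω = U.X n i ω + U.m i then (1:ℝ) else 0)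
      | U.𝓕 n]) = U.μ[Df U n i | U.𝓕 n] from rfl] at hω
    rw [hω]
    rfl
  have h4 : (∑ i : Fin q, U.μ[gf U c n i * Df U n i | U.𝓕 n])
      =ᵐ[U.μ] fun ω => ∑ i : Fin q, gf U c n i ω * ((U.X n i ω : ℝ) / Tf U n ω) := by
    have := eventually_all.mpr fun i : Fin q => h3 i
    filter_upwards [this] with ω hω
    rw [Finset.sum_apply]
    exact Finset.sum_congr rfl fun i _ => hω i
  filter_upwards [h2.trans h4] with ω hω
  rw [hω]
  exact drift hm hinit n ω

end PolyaAux


/-- In the `q`-colour unfair Pólya urn where colour `c` satisfies `m c ≥ m j` for all `j`,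
if initially colour `c` holds an absolute majority (more balls than all the other colours
combined), then with positive probability colour `c` holds an absolute majority at every
time `n ≥ 0`. -/
theorem stmt13 {q : ℕ} {Ω : Type*} [MeasurableSpace Ω] (U : PolyaUrnQ q Ω)
    (hq : 2 ≤ q) (c : Fin q) (hm : ∀ j, U.m j ≤ U.m c)
    (hinit : ∀ j ω, 1 ≤ U.X 0 j ω)
    (hmaj : ∀ ω, (∑ j ∈ Finset.univ.erase c, U.X 0 j ω) < U.X 0 c ω) :
    0 < U.μ {ω | ∀ n, (∑ j ∈ Finset.univ.erase c, U.X n j ω) < U.X n c ω} := by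
  classical
  haveI := U.isProb
  set A : ℕ → Set Ω := fun N => {ω | ∀ n ≤ N, PolyaAux.Yf U c n ω < 1/2} with hA_def
  have hA_F : ∀ N, MeasurableSet[U.𝓕 N] (A N) := by
    intro N
    have hrw : A N = ⋂ n, ⋂ (_ : n ≤ N), {ω | PolyaAux.Yf U c n ω < 1/2} := by
      ext ω; simp [hA_def]
    rw [hrw]
    refine MeasurableSet.iInter fun n => MeasurableSet.iInter fun hn => ?_
    exact measurableSet_lt (PolyaAux.measYf_F hn) measurable_const
  have hA_meas : ∀ N, MeasurableSet (A N) := fun N => U.𝓕.le N _ (hA_F N)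
  have hA_anti : Antitone A := fun M N hMN ω hω n hn => hω n (hn.trans hMN)
  set Z : ℕ → Ω → ℝ := fun N => (A N).indicator (fun ω => 1/2 - PolyaAux.Yf U c N ω)
    with hZ_def
  have hZmeas : ∀ N, Measurable (Z N) := fun N =>
    (measurable_const.sub (PolyaAux.measYf N)).indicator (hA_meas N)
  have hZint : ∀ N, Integrable (Z N) U.μ := by
    intro N
    refine Integrable.mono' (integrable_const 1) (hZmeas N).aestronglyMeasurable ?_
    filter_upwards with ω
    rw [Real.norm_eq_abs, abs_le]
    by_cases h : ω ∈ A N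
    · have h0 := PolyaAux.Yf_nonneg (c := c) hinit N ω
      have h1 := PolyaAux.Yf_le_one (c := c) hinit N ω
      simp only [hZ_def]
      simp only [Set.indicator_of_mem h]
      constructor <;> linarith
    · rw [hZ_def]; simp [Set.indicator_of_notMem h]
  have hmono : ∀ N, ∫ ω, Z N ω ∂U.μ ≤ ∫ ω, Z (N+1) ω ∂U.μ := by
    intro N
    have hsup := PolyaAux.super hm hinit N
    have hintY : Integrable (PolyaAux.Yf U c (N+1)) U.μ := PolyaAux.integrableYf hinit (N+1)
    have hintYN : Integrable (PolyaAux.Yf U c N) U.μ := PolyaAux.integrableYf hinit N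
    have hptw : ∀ ω, (A N).indicator (fun ω => 1/2 - PolyaAux.Yf U c (N+1) ω) ω
        ≤ Z (N+1) ω := by
      intro ω
      by_cases h1 : ω ∈ A (N+1)
      · have h0 : ω ∈ A N := hA_anti (Nat.le_succ N) h1
        simp only [hZ_def]; rw [Set.indicator_of_mem h1, Set.indicator_of_mem h0]
      · simp only [hZ_def]; rw [Set.indicator_of_notMem h1]
        by_cases h0 : ω ∈ A N
        · rw [Set.indicator_of_mem h0]
          by_contra hc
          push_neg at hc
          refine h1 (fun n hn => ?_)
          rcases eq_or_lt_of_le hn with rfl | h'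
          · linarith
          · exact h0 n (Nat.lt_succ_iff.mp h')
        · rw [Set.indicator_of_notMem h0]
    calc ∫ ω, Z N ω ∂U.μ
        = ∫ ω in A N, (1/2 - PolyaAux.Yf U c N ω) ∂U.μ := integral_indicator (hA_meas N)
      _ ≤ ∫ ω in A N, (1/2 - (U.μ[PolyaAux.Yf U c (N+1)|U.𝓕 N]) ω) ∂U.μ := by
          refine setIntegral_mono_ae (((integrable_const (1/2 : ℝ)).sub hintYN).integrableOn)
            (((integrable_const (1/2 : ℝ)).sub integrable_condExp).integrableOn) ?_
          filter_upwards [hsup] with ω hω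
          exact sub_le_sub_left hω _
      _ = ∫ ω in A N, (1/2 - PolyaAux.Yf U c (N+1) ω) ∂U.μ := by
          rw [integral_sub ((integrableOn_const (μ := U.μ) (s := A N) (C := (1/2:ℝ)) (measure_ne_top _ _)))
              integrable_condExp.integrableOn,
            integral_sub ((integrableOn_const (μ := U.μ) (s := A N) (C := (1/2:ℝ)) (measure_ne_top _ _)))
              hintY.integrableOn,
            setIntegral_condExp (U.𝓕.le N) hintY (hA_F N)]
      _ = ∫ ω, (A N).indicator (fun ω => 1/2 - PolyaAux.Yf U c (N+1) ω) ω ∂U.μ :=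
          (integral_indicator (hA_meas N)).symm
      _ ≤ ∫ ω, Z (N+1) ω ∂U.μ := by
          refine integral_mono ?_ (hZint (N+1)) hptw
          refine Integrable.mono' (integrable_const 1)
            ((measurable_const.sub (PolyaAux.measYf (N+1))).indicator
              (hA_meas N)).aestronglyMeasurable ?_
          filter_upwards with ω
          rw [Real.norm_eq_abs, abs_le]
          by_cases h : ω ∈ A N
          · have h0 := PolyaAux.Yf_nonneg (c := c) hinit (N+1) ω
            have h1 := PolyaAux.Yf_le_one (c := c) hinit (N+1) ω
            simp only [Set.indicator_of_mem h]
            constructor <;> linarith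
          · simp [Set.indicator_of_notMem h]
  have hY0 : ∀ ω, PolyaAux.Yf U c 0 ω < 1/2 :=
    fun ω => (PolyaAux.hY_iff hinit 0 ω).mpr (hmaj ω)
  have hA0 : A 0 = Set.univ := by
    ext ω
    simp only [hA_def, Set.mem_setOf_eq, Set.mem_univ, iff_true]
    intro n hn
    rw [Nat.le_zero] at hn; subst hn
    exact hY0 ω
  have hbase : 0 < ∫ ω, Z 0 ω ∂U.μ := by
    have hZ0 : Z 0 = fun ω => 1/2 - PolyaAux.Yf U c 0 ω := by
      funext ω
      simp only [hZ_def]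
      simp [hA0]
    rw [hZ0]
    rw [integral_pos_iff_support_of_nonneg]
    · have hsupp : Function.support (fun ω => 1/2 - PolyaAux.Yf U c 0 ω) = Set.univ := by
        ext ω
        simp only [Function.mem_support, Set.mem_univ, iff_true]
        have := hY0 ω
        intro hcon
        rw [sub_eq_zero] at hcon
        linarith
      rw [hsupp]
      simp
    · intro ω
      have := hY0 ω
      simp only [Pi.zero_apply]
      linarith
    · exact PolyaAux.integrable_of_bounds
        (measurable_const.sub (PolyaAux.measYf 0))
        (fun ω => by have := hY0 ω; linarith)
        (fun ω => by have := PolyaAux.Yf_nonneg (c := c) hinit 0 ω; linarith)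
  have hlow : ∀ N, ∫ ω, Z 0 ω ∂U.μ ≤ ∫ ω, Z N ω ∂U.μ := by
    intro N
    induction N with
    | zero => exact le_refl _
    | succ n ih => exact ih.trans (hmono n)
  have hmuA : ∀ N, ENNReal.ofReal (2 * ∫ ω, Z 0 ω ∂U.μ) ≤ U.μ (A N) := by
    intro N
    have hptw : ∀ ω, Z N ω ≤ (A N).indicator (fun _ => (1:ℝ)/2) ω := by
      intro ω
      by_cases h : ω ∈ A N
      · simp only [hZ_def]
        simp only [Set.indicator_of_mem h]
        have := PolyaAux.Yf_nonneg (c := c) hinit N ω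
        linarith
      · simp only [hZ_def]
        simp [Set.indicator_of_notMem h]
    have h1 : ∫ ω, Z N ω ∂U.μ ≤ 1/2 * (U.μ (A N)).toReal := by
      calc ∫ ω, Z N ω ∂U.μ
          ≤ ∫ ω, (A N).indicator (fun _ => (1:ℝ)/2) ω ∂U.μ := by
            refine integral_mono (hZint N) ?_ hptw
            exact (integrable_const _).indicator (hA_meas N)
        _ = 1/2 * (U.μ (A N)).toReal := by
            rw [integral_indicator_const _ (hA_meas N), smul_eq_mul, mul_comm, measureReal_def]
    have h2 : 2 * ∫ ω, Z 0 ω ∂U.μ ≤ (U.μ (A N)).toReal := by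
      have := hlow N
      linarith
    exact ENNReal.ofReal_le_of_le_toReal h2
  have hset : {ω | ∀ n, (∑ j ∈ Finset.univ.erase c, U.X n j ω) < U.X n c ω}
      = ⋂ N, A N := by
    ext ω
    simp only [Set.mem_setOf_eq, Set.mem_iInter, hA_def]
    constructor
    · intro h N n _
      exact (PolyaAux.hY_iff hinit n ω).mpr (h n)
    · intro h n
      exact (PolyaAux.hY_iff hinit n ω).mp (h n n le_rfl)
  rw [hset]
  have htend := tendsto_measure_iInter_atTop
    (fun N => (hA_meas N).nullMeasurableSet) hA_anti ⟨0, measure_ne_top U.μ _⟩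
  have hlim : ENNReal.ofReal (2 * ∫ ω, Z 0 ω ∂U.μ) ≤ U.μ (⋂ N, A N) :=
    ge_of_tendsto' htend (fun N => hmuA N)
  refine lt_of_lt_of_le ?_ hlim
  exact ENNReal.ofReal_pos.mpr (by linarith)
end

section
/- In the two-colour unfair Pólya urn with m_b ≥ m_w and B_0 ≥ 1, W_0 ≥ 1, the event {lim sup_{n→∞} W_n/B_n < 1} has positive probability. -/
open MeasureTheory ProbabilityTheory Filter Real

/-! ### A maximal inequality for nonnegative supermartingales -/

/-- Maximal inequality for nonnegative supermartingales:
`μ {sup_n f n ≥ ε} ≤ E[f 0] / ε`. -/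
theorem polya_supermart_max {Ω : Type*} {m0 : MeasurableSpace Ω} {μ : Measure Ω}
    [IsFiniteMeasure μ] {𝒢 : Filtration ℕ m0} {f : ℕ → Ω → ℝ}
    (hf : Supermartingale f 𝒢 μ) (hnn : ∀ n ω, 0 ≤ f n ω) {ε : ℝ} (hε : 0 < ε) :
    μ {ω | ∃ n, ε ≤ f n ω} ≤ ENNReal.ofReal ((∫ ω, f 0 ω ∂μ) / ε) := by
  have hmeas : ∀ n, MeasurableSet {ω | ε ≤ f n ω} := fun n =>
    measurableSet_le measurable_const (((hf.stronglyAdapted n).mono (𝒢.le n)).measurable)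
  have key : ∀ n, μ {ω | ∃ j, j ≤ n ∧ ε ≤ f j ω} ≤ ENNReal.ofReal ((∫ ω, f 0 ω ∂μ) / ε) := by
    intro n
    set τ : Ω → WithTop ℕ := fun ω => (hittingBtwn f (Set.Ici ε) 0 n ω : ℕ) with hτdef
    have hτ : IsStoppingTime 𝒢 τ := hittingBtwn_isStoppingTime hf.stronglyAdapted.adapted measurableSet_Ici
    have hτle : ∀ ω, τ ω ≤ n := fun ω => WithTop.coe_le_coe.2 (hittingBtwn_le ω)
    have hsubneg : Submartingale (-f) 𝒢 μ := hf.neg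
    have hsv_int : Integrable (stoppedValue f τ) μ := by
      have h := (hsubneg.integrable_stoppedValue hτ hτle).neg
      have heq : stoppedValue f τ = -stoppedValue (-f) τ := by
        funext ω; simp [stoppedValue]
      rw [heq]; exact h
    have hEsv : ∫ ω, stoppedValue f τ ω ∂μ ≤ ∫ ω, f 0 ω ∂μ := by
      have h := hsubneg.expected_stoppedValue_mono (isStoppingTime_const 𝒢 0) hτ
        (fun ω => WithTop.coe_le_coe.2 (Nat.zero_le _)) hτle
      have h1 : stoppedValue (-f) (fun _ => ((0:ℕ) : WithTop ℕ)) = -(f 0) := by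
        funext ω; simp [stoppedValue]
      have h2 : stoppedValue (-f) τ = -(stoppedValue f τ) := by
        funext ω; simp [stoppedValue]
      rw [h2] at h
      erw [h1] at h
      simp only [Pi.neg_apply] at h
      rw [integral_neg, integral_neg] at h
      linarith
    have hEmeas : MeasurableSet {ω | ∃ j, j ≤ n ∧ ε ≤ f j ω} := by
      have hset : {ω | ∃ j, j ≤ n ∧ ε ≤ f j ω} = ⋃ j ∈ Set.Iic n, {ω | ε ≤ f j ω} := by
        ext ω; simp
      rw [hset]
      exact MeasurableSet.biUnion (Set.to_countable _) fun j _ => hmeas j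
    have hconst : ∀ ω ∈ {ω | ∃ j, j ≤ n ∧ ε ≤ f j ω}, ε ≤ stoppedValue f τ ω := by
      intro ω hω
      obtain ⟨j, hj, hεj⟩ := hω
      exact stoppedValue_hittingBtwn_mem ⟨j, ⟨Nat.zero_le _, hj⟩, hεj⟩
    have h1 : ε * (μ {ω | ∃ j, j ≤ n ∧ ε ≤ f j ω}).toReal
        ≤ ∫ ω in {ω | ∃ j, j ≤ n ∧ ε ≤ f j ω}, stoppedValue f τ ω ∂μ := by
      rw [mul_comm, ← smul_eq_mul]
      exact setIntegral_ge_of_const_le hEmeas (measure_ne_top μ _) hconst hsv_int.integrableOn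
    have h2 : ∫ ω in {ω | ∃ j, j ≤ n ∧ ε ≤ f j ω}, stoppedValue f τ ω ∂μ
        ≤ ∫ ω, stoppedValue f τ ω ∂μ :=
      setIntegral_le_integral hsv_int (Eventually.of_forall fun ω => by
        exact hnn _ ω)
    have h3 : (μ {ω | ∃ j, j ≤ n ∧ ε ≤ f j ω}).toReal ≤ (∫ ω, f 0 ω ∂μ) / ε := by
      rw [le_div_iff₀ hε]
      calc (μ {ω | ∃ j, j ≤ n ∧ ε ≤ f j ω}).toReal * ε
          = ε * (μ {ω | ∃ j, j ≤ n ∧ ε ≤ f j ω}).toReal := mul_comm _ _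
        _ ≤ _ := le_trans h1 (le_trans h2 hEsv)
    calc μ {ω | ∃ j, j ≤ n ∧ ε ≤ f j ω}
        = ENNReal.ofReal (μ {ω | ∃ j, j ≤ n ∧ ε ≤ f j ω}).toReal :=
          (ENNReal.ofReal_toReal (measure_ne_top μ _)).symm
      _ ≤ _ := ENNReal.ofReal_le_ofReal h3
  have hunion : {ω | ∃ n, ε ≤ f n ω} = ⋃ n, {ω | ∃ j, j ≤ n ∧ ε ≤ f j ω} := by
    ext ω
    constructor
    · rintro ⟨n, hn⟩
      exact Set.mem_iUnion.2 ⟨n, n, le_rfl, hn⟩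
    · intro h
      obtain ⟨n, j, _, hj⟩ := Set.mem_iUnion.1 h
      exact ⟨j, hj⟩
  have hdir : Directed (· ⊆ ·) fun n => {ω | ∃ j, j ≤ n ∧ ε ≤ f j ω} := by
    intro i j
    exact ⟨max i j,
      fun ω hω => by obtain ⟨a, ha, hε'⟩ := hω; exact ⟨a, ha.trans (le_max_left _ _), hε'⟩,
      fun ω hω => by obtain ⟨a, ha, hε'⟩ := hω; exact ⟨a, ha.trans (le_max_right _ _), hε'⟩⟩
  rw [hunion, Directed.measure_iUnion hdir]
  exact iSup_le key

/-! ### Auxiliary lemmas about the urn process -/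

namespace PolyaUrn

variable {Ω : Type*} [MeasurableSpace Ω] (U : PolyaUrn Ω)

lemma B_le_succ (n : ℕ) (ω : Ω) : U.B n ω ≤ U.B (n+1) ω := by
  rcases U.step n ω with ⟨h, _⟩ | ⟨h, _⟩ <;> omega

lemma one_le_B (hB0 : ∀ ω, 1 ≤ U.B 0 ω) (n : ℕ) (ω : Ω) : 1 ≤ U.B n ω := by
  induction n with
  | zero => exact hB0 ω
  | succ n ih => exact le_trans ih (U.B_le_succ n ω)

lemma one_le_W (hW0 : ∀ ω, 1 ≤ U.W 0 ω) (n : ℕ) (ω : Ω) : 1 ≤ U.W n ω := by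
  induction n with
  | zero => exact hW0 ω
  | succ n ih =>
    rcases U.step n ω with ⟨_, h⟩ | ⟨_, h⟩ <;> omega

lemma B_add_le (n j : ℕ) (ω : Ω) : U.B (n+j) ω ≤ U.B n ω + j * U.mb := by
  induction j with
  | zero => simp
  | succ j ih =>
    rcases U.step (n+j) ω with ⟨h, _⟩ | ⟨h, _⟩ <;>
    · rw [show n + (j+1) = (n+j) + 1 from rfl, h]
      nlinarith [ih]

lemma allBlack {k : ℕ} {ω : Ω} (h : U.B k ω = U.B 0 ω + k * U.mb) :
    ∀ i, i ≤ k → U.B i ω = U.B 0 ω + i * U.mb ∧ U.W i ω = U.W 0 ω := by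
  have hBi : ∀ i, i ≤ k → U.B i ω = U.B 0 ω + i * U.mb := by
    intro i hik
    have h1 : U.B i ω ≤ U.B 0 ω + i * U.mb := by simpa using U.B_add_le 0 i ω
    have h2 : U.B k ω ≤ U.B i ω + (k - i) * U.mb := by
      have := U.B_add_le i (k-i) ω
      rwa [Nat.add_sub_cancel' hik] at this
    have hsum : i * U.mb + (k - i) * U.mb = k * U.mb := by
      rw [← Nat.add_mul, Nat.add_sub_cancel' hik]
    omega
  have hWi : ∀ i, i ≤ k → U.W i ω = U.W 0 ω := by
    intro i
    induction i with
    | zero => intro _; rfl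
    | succ n ih =>
      intro hik
      have hn : n ≤ k := le_trans (Nat.le_succ n) hik
      have hW : U.W (n+1) ω = U.W n ω := by
        rcases U.step n ω with ⟨_, h2⟩ | ⟨h1, _⟩
        · exact h2
        · exfalso
          have e1 := hBi n hn
          have e2 := hBi (n+1) hik
          have hmb := U.mb_pos
          have hx : (n+1) * U.mb = n * U.mb + U.mb := by ring
          omega
      rw [hW]
      exact ih hn
  exact fun i hik => ⟨hBi i hik, hWi i hik⟩

lemma meas_pair {i n : ℕ} (h : i ≤ n) :
    Measurable[U.𝓕 n] fun ω => (U.B i ω, U.W i ω) := by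
  rw [measurable_iff_comap_le, U.h𝓕 n]
  exact le_biSup (fun i => MeasurableSpace.comap (fun ω => (U.B i ω, U.W i ω)) inferInstance)
    (Set.mem_Iic.2 h)

lemma measB_F {i n : ℕ} (h : i ≤ n) : Measurable[U.𝓕 n] (U.B i) :=
  measurable_fst.comp (U.meas_pair h)

lemma measW_F {i n : ℕ} (h : i ≤ n) : Measurable[U.𝓕 n] (U.W i) :=
  measurable_snd.comp (U.meas_pair h)

lemma measBr {i n : ℕ} (h : i ≤ n) : Measurable[U.𝓕 n] (fun ω => (U.B i ω : ℝ)) :=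
  measurable_from_top.comp (U.measB_F h)

lemma measWr {i n : ℕ} (h : i ≤ n) : Measurable[U.𝓕 n] (fun ω => (U.W i ω : ℝ)) :=
  measurable_from_top.comp (U.measW_F h)

/-- The proportion of white balls. -/
noncomputable def S (n : ℕ) (ω : Ω) : ℝ := (U.W n ω : ℝ) / ((U.B n ω : ℝ) + (U.W n ω : ℝ))

lemma measS {n m' : ℕ} (h : n ≤ m') : Measurable[U.𝓕 m'] (U.S n) :=
  (U.measWr h).div ((U.measBr h).add (U.measWr h))

lemma S_nonneg (n : ℕ) (ω : Ω) : 0 ≤ U.S n ω := by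
  unfold S; positivity

lemma S_le_one (n : ℕ) (ω : Ω) : U.S n ω ≤ 1 := by
  unfold S
  apply div_le_one_of_le₀
  · have : (0:ℝ) ≤ (U.B n ω : ℝ) := Nat.cast_nonneg _
    linarith
  · positivity

lemma int_bdd {f : Ω → ℝ} (hmeas : AEStronglyMeasurable f U.μ) {C : ℝ}
    (hC : ∀ ω, |f ω| ≤ C) : Integrable f U.μ := by
  haveI := U.isProb
  exact (integrable_const C).mono' hmeas
    (Eventually.of_forall fun ω => by simpa [Real.norm_eq_abs] using hC ω)

lemma intS (n : ℕ) : Integrable (U.S n) U.μ :=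
  U.int_bdd ((U.measS (le_refl n)).le (U.𝓕.le n)).aestronglyMeasurable
    (C := 1) (fun ω => by rw [abs_of_nonneg (U.S_nonneg n ω)]; exact U.S_le_one n ω)

/-- The key algebraic inequality showing `S` is a supermartingale when `mw ≤ mb`. -/
lemma key_ineq {b w mB mW : ℝ} (hb : 1 ≤ b) (hw : 1 ≤ w) (hmW : 1 ≤ mW) (hmb : mW ≤ mB) :
    (w / (b + w + mB) - (w + mW) / (b + w + mW)) * (b / (b + w)) + (w + mW) / (b + w + mW)
      ≤ w / (b + w) := by
  have h1 : (0:ℝ) < b + w := by linarith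
  have h2 : (0:ℝ) < b + w + mB := by linarith
  have h3 : (0:ℝ) < b + w + mW := by linarith
  have key : w / (b + w) -
      ((w / (b + w + mB) - (w + mW) / (b + w + mW)) * (b / (b + w)) + (w + mW) / (b + w + mW))
      = (b * ((mB - mW) * w)) / ((b + w) * ((b + w + mB) * (b + w + mW))) := by
    field_simp
    ring
  have hnum : (0:ℝ) ≤ b * ((mB - mW) * w) :=
    mul_nonneg (by linarith) (mul_nonneg (by linarith) (by linarith))
  have hden : (0:ℝ) < (b + w) * ((b + w + mB) * (b + w + mW)) := by positivity
  rw [← sub_nonneg, key]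
  exact div_nonneg hnum hden.le

lemma superS (hm : U.mw ≤ U.mb) (hB0 : ∀ ω, 1 ≤ U.B 0 ω) (hW0 : ∀ ω, 1 ≤ U.W 0 ω) :
    Supermartingale U.S U.𝓕 U.μ := by
  haveI := U.isProb
  refine supermartingale_nat (fun n => (U.measS le_rfl).stronglyMeasurable)
    (fun n => U.intS n) ?_
  intro n
  set I : Ω → ℝ := fun ω => if U.B (n+1) ω = U.B n ω + U.mb then (1:ℝ) else 0 with hI
  set c : Ω → ℝ := fun ω => (U.W n ω : ℝ) / ((U.B n ω : ℝ) + (U.W n ω : ℝ) + (U.mb : ℝ))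
      - ((U.W n ω : ℝ) + (U.mw : ℝ)) / ((U.B n ω : ℝ) + (U.W n ω : ℝ) + (U.mw : ℝ)) with hc
  set d : Ω → ℝ := fun ω =>
      ((U.W n ω : ℝ) + (U.mw : ℝ)) / ((U.B n ω : ℝ) + (U.W n ω : ℝ) + (U.mw : ℝ)) with hd
  have hbpos : ∀ ω, (1:ℝ) ≤ (U.B n ω : ℝ) := fun ω => by
    exact_mod_cast U.one_le_B hB0 n ω
  have hwpos : ∀ ω, (1:ℝ) ≤ (U.W n ω : ℝ) := fun ω => by
    exact_mod_cast U.one_le_W hW0 n ω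
  have hmw1 : (1:ℝ) ≤ (U.mw : ℝ) := by exact_mod_cast U.mw_pos
  have hmb1 : (1:ℝ) ≤ (U.mb : ℝ) := by exact_mod_cast U.mb_pos
  have hmbw : (U.mw : ℝ) ≤ (U.mb : ℝ) := by exact_mod_cast hm
  -- the decomposition of S (n+1)
  have hSid : U.S (n+1) = c * I + d := by
    funext ω
    show U.S (n+1) ω = c ω * I ω + d ω
    have hbnn : (0:ℝ) ≤ (U.B n ω : ℝ) := Nat.cast_nonneg _
    have hwnn : (1:ℝ) ≤ (U.W n ω : ℝ) := hwpos ω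
    have hb1 : (1:ℝ) ≤ (U.B n ω : ℝ) := hbpos ω
    rcases U.step n ω with ⟨h1, h2⟩ | ⟨h1, h2⟩
    · have hIω : I ω = 1 := by simp [hI, h1]
      rw [hIω, mul_one]
      show (U.W (n+1) ω : ℝ) / ((U.B (n+1) ω : ℝ) + (U.W (n+1) ω : ℝ)) = _
      rw [h1, h2, hc, hd]
      push_cast
      have e2 : (0:ℝ) < (U.B n ω : ℝ) + (U.W n ω : ℝ) + (U.mb : ℝ) := by linarith
      rw [sub_add_cancel]
      congr 1
      ring
    · have hIω : I ω = 0 := by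
        have : ¬ (U.B (n+1) ω = U.B n ω + U.mb) := by
          have := U.mb_pos; omega
        simp [hI, this]
      rw [hIω, mul_zero, zero_add]
      show (U.W (n+1) ω : ℝ) / ((U.B (n+1) ω : ℝ) + (U.W (n+1) ω : ℝ)) = _
      rw [h1, h2, hd]
      push_cast
      congr 1
      ring
  -- measurability and integrability
  have hc_sm : StronglyMeasurable[U.𝓕 n] c :=
    (((U.measWr le_rfl).div (((U.measBr le_rfl).add (U.measWr le_rfl)).add measurable_const)).sub
      (((U.measWr le_rfl).add measurable_const).div
        (((U.measBr le_rfl).add (U.measWr le_rfl)).add measurable_const))).stronglyMeasurable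
  have hd_sm : StronglyMeasurable[U.𝓕 n] d :=
    (((U.measWr le_rfl).add measurable_const).div
      (((U.measBr le_rfl).add (U.measWr le_rfl)).add measurable_const)).stronglyMeasurable
  have hfrac01 : ∀ x y : ℝ, 0 ≤ x → x ≤ y → 0 ≤ x / y ∧ x / y ≤ 1 := by
    intro x y hx hxy
    exact ⟨div_nonneg hx (hx.trans hxy), div_le_one_of_le₀ hxy (hx.trans hxy)⟩
  have hcbd : ∀ ω, |c ω| ≤ 1 := by
    intro ω
    have hb1 : (1:ℝ) ≤ (U.B n ω : ℝ) := hbpos ω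
    have hw1 : (1:ℝ) ≤ (U.W n ω : ℝ) := hwpos ω
    have ha := hfrac01 (U.W n ω : ℝ) ((U.B n ω : ℝ) + (U.W n ω : ℝ) + (U.mb : ℝ))
      (by linarith) (by linarith)
    have hb := hfrac01 ((U.W n ω : ℝ) + (U.mw : ℝ)) ((U.B n ω : ℝ) + (U.W n ω : ℝ) + (U.mw : ℝ))
      (by linarith) (by linarith)
    rw [hc, abs_le]
    constructor <;> [linarith [ha.1, hb.2]; linarith [ha.2, hb.1]]
  have hdbd : ∀ ω, |d ω| ≤ 1 := by
    intro ω
    have hb1 : (1:ℝ) ≤ (U.B n ω : ℝ) := hbpos ω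
    have hw1 : (1:ℝ) ≤ (U.W n ω : ℝ) := hwpos ω
    have hb := hfrac01 ((U.W n ω : ℝ) + (U.mw : ℝ)) ((U.B n ω : ℝ) + (U.W n ω : ℝ) + (U.mw : ℝ))
      (by linarith) (by linarith)
    rw [hd, abs_le]
    exact ⟨by linarith [hb.1], hb.2⟩
  have hIbd : ∀ ω, |I ω| ≤ 1 := by
    intro ω
    simp only [hI]
    split <;> simp
  have hc_meas : AEStronglyMeasurable c U.μ := (hc_sm.mono (U.𝓕.le n)).aestronglyMeasurable
  have hd_meas : AEStronglyMeasurable d U.μ := (hd_sm.mono (U.𝓕.le n)).aestronglyMeasurable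
  have hEmeas : MeasurableSet {ω | U.B (n+1) ω = U.B n ω + U.mb} :=
    measurableSet_eq_fun (U.measB (n+1))
      (Measurable.comp' (g := fun x : ℕ => x + U.mb) measurable_from_top (U.measB n))
  have hI_meas : Measurable I := Measurable.ite hEmeas measurable_const measurable_const
  have hI_int : Integrable I U.μ := U.int_bdd hI_meas.aestronglyMeasurable hIbd
  have hcI_int : Integrable (c * I) U.μ := by
    refine U.int_bdd (hc_meas.mul hI_meas.aestronglyMeasurable) (C := 1) fun ω => ?_
    calc |c ω * I ω| = |c ω| * |I ω| := abs_mul _ _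
      _ ≤ 1 * 1 := mul_le_mul (hcbd ω) (hIbd ω) (abs_nonneg _) zero_le_one
      _ = 1 := by norm_num
  have hd_int : Integrable d U.μ := U.int_bdd hd_meas hdbd
  have hd_ce : U.μ[d | U.𝓕 n] = d := condExp_of_stronglyMeasurable (U.𝓕.le n) hd_sm hd_int
  have hmul := condExp_mul_of_stronglyMeasurable_left hc_sm hcI_int hI_int
  have hadd := condExp_add (μ := U.μ) (m := U.𝓕 n) hcI_int hd_int
  have hcondn := U.hcond n
  rw [hSid]
  filter_upwards [hadd, hmul, hcondn] with ω e1 e2 e3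
  simp only [Pi.add_apply, Pi.mul_apply] at e1 e2
  rw [e1, e2, congrFun hd_ce ω]
  have e3' : (U.μ[I | U.𝓕 n]) ω = (U.B n ω : ℝ) / ((U.B n ω : ℝ) + (U.W n ω : ℝ)) := e3
  rw [e3']
  simp only [hc, hd, S]
  exact key_ineq (hbpos ω) (hwpos ω) hmw1 hmbw

/-! ### The seed event: `k` black draws in a row -/

/-- The event that the initial counts are at most `M` and the first `k` draws are all black. -/
def seedSet (M k : ℕ) : Set Ω :=
  {ω | U.B 0 ω ≤ M ∧ U.W 0 ω ≤ M ∧ U.B k ω = U.B 0 ω + k * U.mb}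

lemma seedSet_meas (M k : ℕ) : MeasurableSet[U.𝓕 k] (U.seedSet M k) := by
  have h1 : MeasurableSet[U.𝓕 k] {ω | U.B 0 ω ≤ M} :=
    U.measB_F (Nat.zero_le k) (MeasurableSpace.measurableSet_top : MeasurableSet (Set.Iic M))
  have h2 : MeasurableSet[U.𝓕 k] {ω | U.W 0 ω ≤ M} :=
    U.measW_F (Nat.zero_le k) (MeasurableSpace.measurableSet_top : MeasurableSet (Set.Iic M))
  have h3 : MeasurableSet[U.𝓕 k] {ω | U.B k ω = U.B 0 ω + k * U.mb} :=
    measurableSet_eq_fun (U.measB_F le_rfl)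
      (Measurable.comp' (g := fun x : ℕ => x + k * U.mb) measurable_from_top
        (U.measB_F (Nat.zero_le k)))
  exact h1.inter (h2.inter h3)

lemma exists_M : ∃ M : ℕ, 0 < U.μ {ω | U.B 0 ω ≤ M ∧ U.W 0 ω ≤ M} := by
  haveI := U.isProb
  by_contra h
  push_neg at h
  have h0 : ∀ M : ℕ, U.μ {ω | U.B 0 ω ≤ M ∧ U.W 0 ω ≤ M} = 0 := fun M =>
    le_antisymm (h M) zero_le
  have hnull : U.μ (⋃ M : ℕ, {ω | U.B 0 ω ≤ M ∧ U.W 0 ω ≤ M}) = 0 := measure_iUnion_null h0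
  have huniv : (⋃ M : ℕ, {ω | U.B 0 ω ≤ M ∧ U.W 0 ω ≤ M}) = Set.univ := by
    ext ω
    simp only [Set.mem_iUnion, Set.mem_setOf_eq, Set.mem_univ, iff_true]
    exact ⟨max (U.B 0 ω) (U.W 0 ω), le_max_left _ _, le_max_right _ _⟩
  rw [huniv, measure_univ] at hnull
  exact one_ne_zero hnull

lemma seedSet_pos (hB0 : ∀ ω, 1 ≤ U.B 0 ω) {M : ℕ}
    (hM : 0 < U.μ {ω | U.B 0 ω ≤ M ∧ U.W 0 ω ≤ M}) :
    ∀ k, 0 < U.μ (U.seedSet M k) := by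
  haveI := U.isProb
  intro k
  induction k with
  | zero => simpa [seedSet] using hM
  | succ k ih =>
    have hA𝓕 : MeasurableSet[U.𝓕 k] (U.seedSet M k) := U.seedSet_meas M k
    have hAmeas : MeasurableSet (U.seedSet M k) := U.𝓕.le k _ hA𝓕
    have hEmeas : MeasurableSet {ω | U.B (k+1) ω = U.B k ω + U.mb} :=
      measurableSet_eq_fun (U.measB (k+1))
        (Measurable.comp' (g := fun x : ℕ => x + U.mb) measurable_from_top (U.measB k))
    have hI_meas : Measurable (fun ω => if U.B (k+1) ω = U.B k ω + U.mb then (1:ℝ) else 0) :=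
      Measurable.ite hEmeas measurable_const measurable_const
    have hI_int : Integrable (fun ω => if U.B (k+1) ω = U.B k ω + U.mb then (1:ℝ) else 0) U.μ :=
      U.int_bdd hI_meas.aestronglyMeasurable (C := 1) fun ω => by
        show |if U.B (k+1) ω = U.B k ω + U.mb then (1:ℝ) else 0| ≤ 1
        split <;> simp
    have hind : (fun ω => if U.B (k+1) ω = U.B k ω + U.mb then (1:ℝ) else 0)
        = Set.indicator {ω | U.B (k+1) ω = U.B k ω + U.mb} (fun _ => (1:ℝ)) := by
      funext ω
      by_cases h : U.B (k+1) ω = U.B k ω + U.mb <;>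
        simp [h, Set.indicator_apply]
    have h1 : ∫ ω in U.seedSet M k, (if U.B (k+1) ω = U.B k ω + U.mb then (1:ℝ) else 0) ∂U.μ
        = (U.μ (U.seedSet M k ∩ {ω | U.B (k+1) ω = U.B k ω + U.mb})).toReal := by
      rw [hind, setIntegral_indicator hEmeas, setIntegral_const]
      simp [measureReal_def, Set.inter_comm]
    have h2 : ∫ ω in U.seedSet M k,
          (if U.B (k+1) ω = U.B k ω + U.mb then (1:ℝ) else 0) ∂U.μ
        = ∫ ω in U.seedSet M k,
          (U.μ[(fun ω => if U.B (k+1) ω = U.B k ω + U.mb then (1:ℝ) else 0) | U.𝓕 k]) ω ∂U.μ :=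
      (setIntegral_condExp (U.𝓕.le k) hI_int hA𝓕).symm
    have h3 : ∫ ω in U.seedSet M k,
          (U.μ[(fun ω => if U.B (k+1) ω = U.B k ω + U.mb then (1:ℝ) else 0) | U.𝓕 k]) ω ∂U.μ
        = ∫ ω in U.seedSet M k, (U.B k ω : ℝ) / ((U.B k ω : ℝ) + (U.W k ω : ℝ)) ∂U.μ :=
      integral_congr_ae (ae_restrict_of_ae (U.hcond k))
    have hfint : Integrable (fun ω => (U.B k ω : ℝ) / ((U.B k ω : ℝ) + (U.W k ω : ℝ))) U.μ := by
      refine U.int_bdd ((U.measBr le_rfl).le (U.𝓕.le k) |>.div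
        (((U.measBr le_rfl).add (U.measWr le_rfl)).le (U.𝓕.le k))).aestronglyMeasurable
        (C := 1) fun ω => ?_
      have hb : (0:ℝ) ≤ (U.B k ω : ℝ) := Nat.cast_nonneg _
      have hw : (0:ℝ) ≤ (U.W k ω : ℝ) := Nat.cast_nonneg _
      rw [abs_of_nonneg (by positivity)]
      exact div_le_one_of_le₀ (by linarith) (by positivity)
    have h4 : (1/((M:ℝ)+1)) * (U.μ (U.seedSet M k)).toReal
        ≤ ∫ ω in U.seedSet M k, (U.B k ω : ℝ) / ((U.B k ω : ℝ) + (U.W k ω : ℝ)) ∂U.μ := by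
      rw [mul_comm, ← smul_eq_mul]
      refine setIntegral_ge_of_const_le hAmeas (measure_ne_top _ _) ?_ hfint.integrableOn
      intro ω hω
      obtain ⟨hB, hW, hk⟩ := hω
      have hWk : U.W k ω = U.W 0 ω := (U.allBlack hk k le_rfl).2
      have hb1 : (1:ℝ) ≤ (U.B k ω : ℝ) := by exact_mod_cast U.one_le_B hB0 k ω
      have hwM : (U.W k ω : ℝ) ≤ (M:ℝ) := by
        rw [hWk]; exact_mod_cast hW
      rw [div_le_div_iff₀ (by positivity) (by positivity)]
      nlinarith
    have htpos : 0 < (U.μ (U.seedSet M k)).toReal :=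
      ENNReal.toReal_pos ih.ne' (measure_ne_top _ _)
    have hprod : 0 < (U.μ (U.seedSet M k ∩ {ω | U.B (k+1) ω = U.B k ω + U.mb})).toReal := by
      rw [← h1, h2, h3]
      calc (0:ℝ) < (1/((M:ℝ)+1)) * (U.μ (U.seedSet M k)).toReal := by positivity
        _ ≤ _ := h4
    have hposint : 0 < U.μ (U.seedSet M k ∩ {ω | U.B (k+1) ω = U.B k ω + U.mb}) := by
      by_contra h
      push_neg at h
      have : U.μ (U.seedSet M k ∩ {ω | U.B (k+1) ω = U.B k ω + U.mb}) = 0 :=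
        le_antisymm h zero_le
      rw [this] at hprod
      simp at hprod
    refine lt_of_lt_of_le hposint (measure_mono ?_)
    rintro ω ⟨⟨hB, hW, hk⟩, hE⟩
    refine ⟨hB, hW, ?_⟩
    have hx : (k+1) * U.mb = k * U.mb + U.mb := by ring
    simp only [Set.mem_setOf_eq] at hE
    omega

end PolyaUrn

/-- In the two-colour unfair Pólya urn with `mb ≥ mw` and at least one ball of each colour
initially, the event `{limsup W n / B n < 1}` has positive probability. -/
theorem stmt17 {Ω : Type*} [MeasurableSpace Ω] (U : PolyaUrn Ω)
    (hm : U.mw ≤ U.mb) (hB0 : ∀ ω, 1 ≤ U.B 0 ω) (hW0 : ∀ ω, 1 ≤ U.W 0 ω) :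
    0 < U.μ {ω | limsup (fun n => (U.W n ω : ℝ) / (U.B n ω : ℝ)) atTop < 1} := by
  classical
  haveI := U.isProb
  obtain ⟨M, hM⟩ := U.exists_M
  set k : ℕ := 4 * M with hk
  set A : Set Ω := U.seedSet M k with hA
  have hApos : 0 < U.μ A := U.seedSet_pos hB0 hM k
  have hA𝓕 : MeasurableSet[U.𝓕 k] A := U.seedSet_meas M k
  have hAmeas : MeasurableSet A := U.𝓕.le k _ hA𝓕
  -- on A, S k ≤ 1/5
  have hS15 : ∀ ω ∈ A, U.S k ω ≤ 1/5 := by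
    intro ω hω
    obtain ⟨hB, hW, hkω⟩ := hω
    have hWk : U.W k ω = U.W 0 ω := (U.allBlack hkω k le_rfl).2
    have hb : (U.B k ω : ℝ) = (U.B 0 ω : ℝ) + (k : ℝ) * (U.mb : ℝ) := by exact_mod_cast hkω
    have hwM : (U.W k ω : ℝ) ≤ (M:ℝ) := by rw [hWk]; exact_mod_cast hW
    have hw1 : (1:ℝ) ≤ (U.W k ω : ℝ) := by exact_mod_cast U.one_le_W hW0 k ω
    have hb0 : (1:ℝ) ≤ (U.B 0 ω : ℝ) := by exact_mod_cast hB0 ω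
    have hmb1 : (1:ℝ) ≤ (U.mb : ℝ) := by exact_mod_cast U.mb_pos
    have hkR : (k:ℝ) = 4 * (M:ℝ) := by rw [hk]; push_cast; ring
    show (U.W k ω : ℝ) / ((U.B k ω : ℝ) + (U.W k ω : ℝ)) ≤ 1/5
    rw [div_le_iff₀ (by nlinarith)]
    nlinarith
  -- shifted filtration and stopped/indicator supermartingale
  set 𝒢 : Filtration ℕ ‹MeasurableSpace Ω› :=
    ⟨fun n => U.𝓕 (k+n), fun i j hij => U.𝓕.mono (by omega), fun n => U.𝓕.le _⟩ with h𝒢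
  set Y : ℕ → Ω → ℝ := fun n => A.indicator (U.S (k+n)) with hY
  have hsuper := U.superS hm hB0 hW0
  have hAn : ∀ n, MeasurableSet[U.𝓕 (k+n)] A := fun n =>
    (U.𝓕.mono (Nat.le_add_right k n)) _ hA𝓕
  have hYint : ∀ n, Integrable (Y n) U.μ := fun n => (U.intS (k+n)).indicator hAmeas
  have hYsuper : Supermartingale Y 𝒢 U.μ := by
    refine supermartingale_nat ?_ hYint ?_
    · intro n
      exact StronglyMeasurable.indicator (U.measS le_rfl).stronglyMeasurable (hAn n)
    · intro n
      have h1 : U.μ[Y (n+1) | U.𝓕 (k+n)]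
          =ᵐ[U.μ] A.indicator (U.μ[U.S (k+n+1) | U.𝓕 (k+n)]) :=
        condExp_indicator (U.intS (k+n+1)) (hAn n)
      have h2 := hsuper.2.1 (k+n) (k+n+1) (Nat.le_succ _)
      filter_upwards [h1, h2] with ω hω1 hω2
      show (U.μ[Y (n+1) | U.𝓕 (k+n)]) ω ≤ Y n ω
      rw [hω1]
      by_cases hωA : ω ∈ A
      · rw [Set.indicator_of_mem hωA, hY]
        simp only [Set.indicator_of_mem hωA]
        exact hω2
      · rw [Set.indicator_of_notMem hωA, hY]
        simp only [Set.indicator_of_notMem hωA]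
        exact le_refl 0
  have hnn : ∀ n ω, 0 ≤ Y n ω := fun n ω =>
    Set.indicator_nonneg (fun ω _ => U.S_nonneg _ ω) ω
  have hY0 : ∫ ω, Y 0 ω ∂U.μ ≤ (1/5) * (U.μ A).toReal := by
    have hint : ∫ ω, Y 0 ω ∂U.μ = ∫ ω in A, U.S k ω ∂U.μ := by
      simp only [hY]
      rw [integral_indicator hAmeas]
      rfl
    rw [hint]
    calc ∫ ω in A, U.S k ω ∂U.μ ≤ ∫ ω in A, (1/5 : ℝ) ∂U.μ :=
        setIntegral_mono_on (U.intS k).integrableOn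
          (integrableOn_const (measure_ne_top _ _)) hAmeas hS15
      _ = (1/5) * (U.μ A).toReal := by rw [setIntegral_const, smul_eq_mul, measureReal_def]; ring
  have hmax := polya_supermart_max hYsuper hnn (by norm_num : (0:ℝ) < 2/5)
  have htpos : 0 < (U.μ A).toReal := ENNReal.toReal_pos hApos.ne' (measure_ne_top _ _)
  have hbadlt : U.μ {ω | ∃ n, 2/5 ≤ Y n ω} < U.μ A := by
    calc U.μ {ω | ∃ n, 2/5 ≤ Y n ω} ≤ ENNReal.ofReal ((∫ ω, Y 0 ω ∂U.μ) / (2/5)) := hmax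
      _ ≤ ENNReal.ofReal ((U.μ A).toReal / 2) := ENNReal.ofReal_le_ofReal (by linarith [hY0])
      _ < U.μ A := by
        conv_rhs => rw [← ENNReal.ofReal_toReal (measure_ne_top U.μ A)]
        exact (ENNReal.ofReal_lt_ofReal_iff htpos).2 (by linarith)
  have hgoodpos : 0 < U.μ (A \ {ω | ∃ n, 2/5 ≤ Y n ω}) :=
    lt_of_lt_of_le (tsub_pos_of_lt hbadlt) le_measure_diff
  refine lt_of_lt_of_le hgoodpos (measure_mono ?_)
  rintro ω ⟨hωA, hωbad⟩
  simp only [Set.mem_setOf_eq, not_exists, not_le] at hωbad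
  have hSlt : ∀ n, U.S (k+n) ω < 2/5 := by
    intro n
    have hn := hωbad n
    simp only [hY] at hn
    rwa [Set.indicator_of_mem hωA] at hn
  have hWB : ∀ n, k ≤ n → (U.W n ω : ℝ)/(U.B n ω : ℝ) ≤ 2/3 := by
    intro n hn
    obtain ⟨j, rfl⟩ := Nat.exists_eq_add_of_le hn
    have h := hSlt j
    have hb : (1:ℝ) ≤ (U.B (k+j) ω : ℝ) := by exact_mod_cast U.one_le_B hB0 _ ω
    have hw : (0:ℝ) ≤ (U.W (k+j) ω : ℝ) := Nat.cast_nonneg _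
    have h' : (U.W (k+j) ω : ℝ) / ((U.B (k+j) ω : ℝ) + (U.W (k+j) ω : ℝ)) < 2/5 := h
    rw [div_lt_iff₀ (by linarith)] at h'
    rw [div_le_iff₀ (by linarith)]
    linarith
  have hcob : IsCoboundedUnder (· ≤ ·) atTop (fun n => (U.W n ω : ℝ)/(U.B n ω : ℝ)) :=
    isCoboundedUnder_le_of_le atTop (x := 0) fun n =>
      div_nonneg (Nat.cast_nonneg _) (Nat.cast_nonneg _)
  have hev : ∀ᶠ n in atTop, (U.W n ω : ℝ)/(U.B n ω : ℝ) ≤ 2/3 := eventually_atTop.2 ⟨k, hWB⟩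
  have hls := limsup_le_of_le hcob hev
  simp only [Set.mem_setOf_eq]
  exact lt_of_le_of_lt hls (by norm_num)
end
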